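/- arXiv:math-ph/0612022 — 6 statements merged into one kernel-verified Lean document; each statement's English description precedes it below -/
import Mathlib

section
/- Finite-time Girsanov theorem: Let m₀ be a probability measure on ℝ^d, let α ∈ ℝ^d, let K be a positive definite d×d real matrix, and let T ≥ 1 be an integer. Let w = (w(0), w(1), ..., w(T)) be independent random vectors with w(0) distributed according to m₀ and w(t) distributed according to N(α,K) for 1 ≤ t ≤ T. Let φ and ψ be measurable maps from ℝ^d to ℝ^d, and define two random trajectories x and y in (ℝ^d)^{{0,...,T}} by x(0) = w(0), x(t+1) = φ(x(t)) + w(t+1), and y(0) = w(0), y(t+1) = ψ(y(t)) + w(t+1). Let P and Q be the probability laws of x and y on (ℝ^d)^{{0,...,T}}. Then Q is absolutely continuous with respect to P, and for P-almost every η, dQ/dP(η) = exp( Σ_{t=0}^{T−1} [ −(1/2)·(ψ(η(t))−φ(η(t)))ᵀ K⁻¹ (ψ(η(t))−φ(η(t))) + (ψ(η(t))−φ(η(t)))ᵀ K⁻¹ (η(t+1) − α − φ(η(t))) ] ). -/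
open MeasureTheory ProbabilityTheory Matrix
open ENNReal

/-- The Gaussian probability measure `N(α, K)` on `ℝ^d` (realized as `Fin d → ℝ`) with mean
`α` and positive definite covariance matrix `K`, defined by its density
`(2π)^{−d/2} det(K)^{−1/2} exp(−½ (x−α)ᵀ K⁻¹ (x−α))` with respect to Lebesgue measure. -/
noncomputable def multiGaussian (d : ℕ) (α : Fin d → ℝ) (K : Matrix (Fin d) (Fin d) ℝ) :
    Measure (Fin d → ℝ) :=
  (volume : Measure (Fin d → ℝ)).withDensity fun x =>
    ENNReal.ofReal ((2 * Real.pi) ^ (-(d : ℝ) / 2) * K.det ^ (-(1 : ℝ) / 2) *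
      Real.exp (-(1 / 2) * ((x - α) ⬝ᵥ K⁻¹ *ᵥ (x - α))))


lemma lintegral_pi_prod {n : ℕ} {X : Type*} [MeasurableSpace X]
    (μ : Fin n → Measure X) [∀ i, SigmaFinite (μ i)]
    (f : Fin n → X → ℝ≥0∞) (hf : ∀ i, Measurable (f i)) :
    ∫⁻ η, ∏ i, f i (η i) ∂Measure.pi μ = ∏ i, ∫⁻ v, f i v ∂(μ i) := by
  induction n with
  | zero => simp [lintegral_const, Measure.pi_univ]
  | succ n ih =>
    set e := MeasurableEquiv.piFinSuccAbove (fun _ : Fin (n+1) => X) 0 with he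
    have hfam : (fun j : Fin n => μ (Fin.succAbove 0 j)) = fun j => μ j.succ :=
      funext fun j => by rw [Fin.zero_succAbove]
    have mp := (measurePreserving_piFinSuccAbove μ 0).symm e
    rw [hfam] at mp
    have hF : Measurable fun η : Fin (n+1) → X => ∏ i, f i (η i) :=
      Finset.measurable_prod _ fun i _ => (hf i).comp (measurable_pi_apply i)
    rw [← mp.lintegral_comp hF]
    have hptwise : ∀ p : X × (Fin n → X),
        (∏ i, f i (e.symm p i)) = f 0 p.1 * ∏ j : Fin n, f j.succ (p.2 j) := by
      intro p
      have h0 : (e.symm p : Fin (n+1) → X) = Fin.insertNth 0 p.1 p.2 := rfl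
      rw [h0, Fin.prod_univ_succ, Fin.insertNth_apply_same]
      refine congrArg _ (Finset.prod_congr rfl fun j _ => ?_)
      rw [← Fin.zero_succAbove j, Fin.insertNth_apply_succAbove]
    calc ∫⁻ p, (∏ i, f i (e.symm p i)) ∂((μ 0).prod (Measure.pi fun j => μ j.succ))
        = ∫⁻ p, f 0 p.1 * ∏ j : Fin n, f j.succ (p.2 j)
            ∂((μ 0).prod (Measure.pi fun j => μ j.succ)) := by
          exact lintegral_congr hptwise
      _ = (∫⁻ v, f 0 v ∂μ 0) * ∫⁻ r, ∏ j : Fin n, f j.succ (r j)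
            ∂(Measure.pi fun j => μ j.succ) :=
          lintegral_prod_mul (hf 0).aemeasurable
            (Finset.measurable_prod _ fun (j : Fin n) _ =>
              (hf j.succ).comp (measurable_pi_apply j)).aemeasurable
      _ = ∏ i, ∫⁻ v, f i v ∂(μ i) := by
          rw [ih (fun j => μ j.succ) (fun j => f j.succ) (fun j => hf j.succ),
            Fin.prod_univ_succ]

lemma map_withDensity_equiv {X Y : Type*} [MeasurableSpace X] [MeasurableSpace Y]
    (e : X ≃ᵐ Y) (μ : Measure X) {f : X → ℝ≥0∞} (hf : Measurable f) :
    Measure.map e (μ.withDensity f) = (Measure.map e μ).withDensity (fun y => f (e.symm y)) := by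
  ext s hs
  rw [Measure.map_apply e.measurable hs, withDensity_apply _ (e.measurable hs),
    withDensity_apply _ hs,
    setLIntegral_map (f := fun y => f (e.symm y)) hs (hf.comp e.symm.measurable) e.measurable]
  refine setLIntegral_congr_fun (e.measurable hs) (fun x _ => ?_)
  simp

lemma pi_withDensity_fam {n : ℕ} {X : Type*} [MeasurableSpace X]
    (B : Fin n → Measure X) [∀ i, SigmaFinite (B i)]
    (g : Fin n → X → ℝ≥0∞) (hg : ∀ i, Measurable (g i))
    [∀ i, SigmaFinite ((B i).withDensity (g i))] :
    Measure.pi (fun i => (B i).withDensity (g i)) =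
      (Measure.pi B).withDensity (fun η => ∏ i, g i (η i)) := by
  refine Measure.pi_eq fun s hs => ?_
  rw [withDensity_apply _ (MeasurableSet.univ_pi hs), ← lintegral_indicator (MeasurableSet.univ_pi hs)]
  have : ∀ η, (Set.univ.pi s).indicator (fun η => ∏ i, g i (η i)) η
      = ∏ i, (s i).indicator (g i) (η i) := by
    intro η
    by_cases h : η ∈ Set.univ.pi s
    · rw [Set.indicator_of_mem h]
      exact Finset.prod_congr rfl fun i _ =>
        (Set.indicator_of_mem (h i (Set.mem_univ i)) _).symm
    · rw [Set.indicator_of_notMem h]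
      simp only [Set.mem_univ_pi, not_forall] at h
      obtain ⟨i, hi⟩ := h
      exact (Finset.prod_eq_zero (Finset.mem_univ i) (Set.indicator_of_notMem hi _)).symm
  rw [lintegral_congr this,
    lintegral_pi_prod B (fun i => (s i).indicator (g i)) (fun i => (hg i).indicator (hs i))]
  exact Finset.prod_congr rfl fun i _ => by
    rw [lintegral_indicator (hs i), withDensity_apply _ (hs i)]

noncomputable def gaussDen (d : ℕ) (α : Fin d → ℝ) (K : Matrix (Fin d) (Fin d) ℝ) :
    (Fin d → ℝ) → ℝ≥0∞ := fun v =>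
  ENNReal.ofReal ((2 * Real.pi) ^ (-(d : ℝ) / 2) * K.det ^ (-(1 : ℝ) / 2) *
      Real.exp (-(1 / 2) * ((v - α) ⬝ᵥ K⁻¹ *ᵥ (v - α))))

lemma measurable_dotmul {d : ℕ} (K : Matrix (Fin d) (Fin d) ℝ) :
    Measurable (fun p : (Fin d → ℝ) × (Fin d → ℝ) => p.1 ⬝ᵥ K *ᵥ p.2) := by
  simp only [dotProduct, mulVec]
  refine Finset.measurable_sum _ fun i _ => Measurable.mul ?_ ?_
  · exact (measurable_pi_apply i).comp measurable_fst
  · exact (Finset.measurable_sum _ fun j _ =>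
      (measurable_const.mul ((measurable_pi_apply j).comp measurable_snd)))

lemma gaussDen_measurable (d : ℕ) (α : Fin d → ℝ) (K : Matrix (Fin d) (Fin d) ℝ) :
    Measurable (gaussDen d α K) := by
  apply ENNReal.measurable_ofReal.comp
  refine Measurable.mul measurable_const (Real.measurable_exp.comp ?_)
  refine Measurable.const_mul ?_ _
  have hsub : Measurable fun v : Fin d → ℝ => v - α := measurable_id.sub measurable_const
  exact (measurable_dotmul K⁻¹).comp (hsub.prodMk hsub)

section Shear
variable {d T : ℕ}

/-- Shear map on trajectory space: adds `f` of coordinate `c` to coordinate `c+1`. -/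
noncomputable def shearEquiv (d T : ℕ) (c : Fin T) (f : (Fin d → ℝ) → (Fin d → ℝ))
    (hf : Measurable f) :
    (Fin (T+1) → Fin d → ℝ) ≃ᵐ (Fin (T+1) → Fin d → ℝ) where
  toFun η := fun s => if s = c.succ then η s + f (η c.castSucc) else η s
  invFun η := fun s => if s = c.succ then η s - f (η c.castSucc) else η s
  left_inv η := by
    have hne : c.castSucc ≠ c.succ := (Fin.castSucc_lt_succ : c.castSucc < c.succ).ne
    funext s
    by_cases h : s = c.succ <;> simp [h, hne]
  right_inv η := by
    have hne : c.castSucc ≠ c.succ := (Fin.castSucc_lt_succ : c.castSucc < c.succ).ne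
    funext s
    by_cases h : s = c.succ <;> simp [h, hne]
  measurable_toFun := by
    show Measurable fun (η : Fin (T+1) → Fin d → ℝ) =>
      (fun s => if s = c.succ then η s + f (η c.castSucc) else η s)
    refine measurable_pi_lambda _ fun s => ?_
    by_cases h : s = c.succ
    · simp only [if_pos h]
      exact (measurable_pi_apply s).add (hf.comp (measurable_pi_apply _))
    · simp only [if_neg h]
      exact measurable_pi_apply s
  measurable_invFun := by
    show Measurable fun (η : Fin (T+1) → Fin d → ℝ) =>
      (fun s => if s = c.succ then η s - f (η c.castSucc) else η s)
    refine measurable_pi_lambda _ fun s => ?_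
    by_cases h : s = c.succ
    · simp only [if_pos h]
      exact (measurable_pi_apply s).sub (hf.comp (measurable_pi_apply _))
    · simp only [if_neg h]
      exact measurable_pi_apply s

lemma shearEquiv_measurePreserving (m₀ : Measure (Fin d → ℝ)) [IsProbabilityMeasure m₀]
    (c : Fin T) (f : (Fin d → ℝ) → (Fin d → ℝ)) (hf : Measurable f) :
    MeasurePreserving (shearEquiv d T c f hf)
      (Measure.pi (Fin.cases m₀ fun _ => (volume : Measure (Fin d → ℝ))))
      (Measure.pi (Fin.cases m₀ fun _ => (volume : Measure (Fin d → ℝ)))) := by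
  set B : Fin (T+1) → Measure (Fin d → ℝ) := Fin.cases m₀ fun _ => volume with hB
  haveI : ∀ i, SigmaFinite (B i) := fun i => by
    induction i using Fin.cases <;> simp only [hB, Fin.cases_zero, Fin.cases_succ] <;>
      infer_instance
  set j : Fin (T+1) := c.succ with hj
  set e := MeasurableEquiv.piFinSuccAbove (fun _ : Fin (T+1) => (Fin d → ℝ)) j with he
  set ρ : Measure (Fin T → Fin d → ℝ) := Measure.pi (fun j' => B (j.succAbove j')) with hρ
  have hBj : B j = volume := by simp [hB, hj]
  have mp1 : MeasurePreserving e (Measure.pi B)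
      ((volume : Measure (Fin d → ℝ)).prod ρ) := by
    have := measurePreserving_piFinSuccAbove B j
    rwa [hBj] at this
  -- skew product on the swapped factors
  have hmeasg : Measurable (Function.uncurry fun (r : Fin T → Fin d → ℝ) (v : Fin d → ℝ) =>
      v + f (r c)) :=
    (measurable_snd.add (hf.comp ((measurable_pi_apply c).comp measurable_fst)))
  have mpskew : MeasurePreserving
      (fun p : (Fin T → Fin d → ℝ) × (Fin d → ℝ) => (p.1, p.2 + f (p.1 c)))
      (ρ.prod volume) (ρ.prod volume) :=
    (MeasurePreserving.id ρ).skew_product hmeasg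
      (ae_of_all _ fun r => map_add_right_eq_self volume (f (r c)))
  have mpS' : MeasurePreserving
      (fun p : (Fin d → ℝ) × (Fin T → Fin d → ℝ) => (p.1 + f (p.2 c), p.2))
      ((volume : Measure (Fin d → ℝ)).prod ρ) ((volume : Measure (Fin d → ℝ)).prod ρ) := by
    have := (Measure.measurePreserving_swap).comp (mpskew.comp Measure.measurePreserving_swap)
    convert this using 1
    funext p; rfl
  have hconj : ∀ η, (shearEquiv d T c f hf) η =
      e.symm ((fun p : (Fin d → ℝ) × (Fin T → Fin d → ℝ) => (p.1 + f (p.2 c), p.2)) (e η)) := by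
    intro η
    have hc : j.succAbove c = c.castSucc :=
      Fin.succAbove_of_castSucc_lt _ _ (Fin.castSucc_lt_succ : c.castSucc < c.succ)
    apply e.injective
    rw [e.apply_symm_apply]
    have heapp : ∀ ξ : Fin (T+1) → Fin d → ℝ, e ξ = (ξ j, fun k => ξ (j.succAbove k)) := by
      intro ξ; rfl
    rw [heapp, heapp]
    refine Prod.ext ?_ ?_
    · show (shearEquiv d T c f hf) η j = η j + f ((fun k => η (j.succAbove k)) c)
      simp [shearEquiv, hc]
      exact fun h => absurd hj h
    · funext k
      show (shearEquiv d T c f hf) η (j.succAbove k) = η (j.succAbove k)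
      simp [shearEquiv, if_neg (Fin.succAbove_ne j k)]
      exact fun h => absurd (h.trans hj.symm) (Fin.succAbove_ne j k)
  have : ⇑(shearEquiv d T c f hf) =
      (⇑e.symm) ∘ (fun p : (Fin d → ℝ) × (Fin T → Fin d → ℝ) => (p.1 + f (p.2 c), p.2)) ∘ ⇑e :=
    funext hconj
  rw [this]
  exact (mp1.symm e).comp (mpS'.comp mp1)

end Shear

noncomputable def iterF (d T : ℕ) (φ : (Fin d → ℝ) → Fin d → ℝ) (hφ : Measurable φ) :
    ℕ → (Fin (T+1) → Fin d → ℝ) → (Fin (T+1) → Fin d → ℝ)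
  | 0 => id
  | (k+1) => if h : k < T then (shearEquiv d T ⟨k, h⟩ φ hφ) ∘ iterF d T φ hφ k
             else iterF d T φ hφ k

lemma iterF_measurable (d T : ℕ) (φ : (Fin d → ℝ) → Fin d → ℝ) (hφ : Measurable φ) (k : ℕ) :
    Measurable (iterF d T φ hφ k) := by
  induction k with
  | zero => exact measurable_id
  | succ k ih =>
    by_cases h : k < T
    · simp only [iterF, dif_pos h]
      exact (shearEquiv d T ⟨k, h⟩ φ hφ).measurable.comp ih
    · simpa only [iterF, dif_neg h] using ih

def gam (d T : ℕ) (φ : (Fin d → ℝ) → Fin d → ℝ) (k : ℕ)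
    (η : Fin (T+1) → Fin d → ℝ) : Fin (T+1) → Fin d → ℝ :=
  fun s => Fin.cases (η 0)
    (fun t => if (t : ℕ) < k then η t.succ - φ (η t.castSucc) else η t.succ) s

lemma gam_zero (d T : ℕ) (φ : (Fin d → ℝ) → Fin d → ℝ) :
    gam d T φ 0 = id := by
  funext η s
  induction s using Fin.cases with
  | zero => rfl
  | succ t => simp [gam]

lemma gam_measurable (d T : ℕ) (φ : (Fin d → ℝ) → Fin d → ℝ) (hφ : Measurable φ) (k : ℕ) :
    Measurable (gam d T φ k) := by
  refine measurable_pi_lambda _ fun s => ?_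
  induction s using Fin.cases with
  | zero =>
    simp only [gam, Fin.cases_zero]
    exact measurable_pi_apply 0
  | succ t =>
    simp only [gam, Fin.cases_succ]
    by_cases h : (t : ℕ) < k
    · simp only [if_pos h]
      exact (measurable_pi_apply _).sub (hφ.comp (measurable_pi_apply _))
    · simp only [if_neg h]
      exact measurable_pi_apply _

lemma gam_step (d T : ℕ) (φ : (Fin d → ℝ) → Fin d → ℝ) (hφ : Measurable φ)
    (k : ℕ) (h : k < T) :
    (gam d T φ k) ∘ ⇑(shearEquiv d T ⟨k, h⟩ φ hφ).symm = gam d T φ (k+1) := by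
  funext η s
  set c : Fin T := ⟨k, h⟩ with hc
  have hξ : ∀ s', (shearEquiv d T c φ hφ).symm η s' =
      if s' = c.succ then η s' - φ (η c.castSucc) else η s' := fun s' => rfl
  induction s using Fin.cases with
  | zero =>
    show (shearEquiv d T c φ hφ).symm η 0 = η 0
    rw [hξ, if_neg (Fin.succ_ne_zero c).symm]
  | succ t =>
    show (if (t : ℕ) < k then _ - φ _ else _) = _
    simp only [gam, Fin.cases_succ, hξ]
    have htsucc : (t.succ = c.succ) ↔ t = c := Fin.succ_inj
    rcases Nat.lt_trichotomy (t : ℕ) k with hlt | heq | hgt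
    · have ht_ne : t ≠ c := fun hh => by rw [hh, hc] at hlt; exact lt_irrefl _ hlt
      have htcast : t.castSucc ≠ c.succ := by
        intro hh
        have := congrArg Fin.val hh
        rw [Fin.coe_castSucc, Fin.val_succ] at this
        have hcv : (c : ℕ) = k := rfl
        omega
      rw [if_pos hlt, if_neg (fun hh => ht_ne (htsucc.mp hh)), if_neg htcast,
        if_pos (Nat.lt_succ_of_lt hlt)]
    · have ht : t = c := Fin.ext (by simp [hc, heq])
      rw [if_neg (by omega), if_pos (htsucc.mpr ht), if_pos (by omega), ht]
    · rw [if_neg (by omega), if_neg (fun hh => by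
        have := congrArg Fin.val (htsucc.mp hh); simp [hc] at this; omega),
        if_neg (by omega)]

lemma iIndepFun_map_pi {Ω ι X : Type*} [MeasurableSpace Ω] [Fintype ι] [MeasurableSpace X]
    (Pr : Measure Ω) [IsProbabilityMeasure Pr] (w : ι → Ω → X)
    (hwm : ∀ i, Measurable (w i))
    (h : iIndepFun w Pr) :
    Measure.map (fun ω i => w i ω) Pr = Measure.pi fun i => Measure.map (w i) Pr := by
  haveI : ∀ i, IsProbabilityMeasure (Measure.map (w i) Pr) :=
    fun i => Measure.isProbabilityMeasure_map (hwm i).aemeasurable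
  refine (Measure.pi_eq fun s hs => ?_).symm
  have hmeas : Measurable fun ω i => w i ω := measurable_pi_lambda _ hwm
  rw [Measure.map_apply hmeas (MeasurableSet.univ_pi hs)]
  have hpre : (fun ω i => w i ω) ⁻¹' Set.univ.pi s = ⋂ i, w i ⁻¹' s i := by
    ext ω; simp [Set.mem_univ_pi]
  rw [hpre, h.meas_iInter fun i => ⟨s i, hs i, rfl⟩]
  exact Finset.prod_congr rfl fun i _ => (Measure.map_apply (hwm i) (hs i)).symm

theorem law_of_trajectory
    {Ω : Type*} [MeasurableSpace Ω] (Pr : Measure Ω) [IsProbabilityMeasure Pr]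
    (d T : ℕ) (hT : 1 ≤ T)
    (m₀ : Measure (Fin d → ℝ)) [IsProbabilityMeasure m₀]
    (α : Fin d → ℝ) (K : Matrix (Fin d) (Fin d) ℝ)
    (w : Fin (T + 1) → Ω → (Fin d → ℝ))
    (hwm : ∀ t, Measurable (w t))
    (hwindep : iIndepFun w Pr)
    (hw0 : Measure.map (w 0) Pr = m₀)
    (hwt : ∀ t : Fin T, Measure.map (w t.succ) Pr = multiGaussian d α K)
    (φ : (Fin d → ℝ) → (Fin d → ℝ)) (hφ : Measurable φ)
    (x : Ω → Fin (T + 1) → (Fin d → ℝ)) (hxm : Measurable x)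
    (hx0 : ∀ ω, x ω 0 = w 0 ω)
    (hxs : ∀ ω, ∀ t : Fin T, x ω t.succ = φ (x ω t.castSucc) + w t.succ ω) :
    Measure.map x Pr =
      (Measure.pi (Fin.cases m₀ fun _ => (volume : Measure (Fin d → ℝ)))).withDensity
        (fun η => ∏ t : Fin T, gaussDen d α K (η t.succ - φ (η t.castSucc))) := by
  classical
  set B : Fin (T+1) → Measure (Fin d → ℝ) := Fin.cases m₀ fun _ => volume with hB
  haveI hBsf : ∀ i, SigmaFinite (B i) := fun i => by
    induction i using Fin.cases <;> simp only [hB, Fin.cases_zero, Fin.cases_succ] <;>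
      infer_instance
  haveI : ∀ t, IsProbabilityMeasure (Measure.map (w t) Pr) :=
    fun t => Measure.isProbabilityMeasure_map (hwm t).aemeasurable
  set g : Fin (T+1) → (Fin d → ℝ) → ℝ≥0∞ := Fin.cases 1 fun _ => gaussDen d α K with hg
  have hgmeas : ∀ i, Measurable (g i) := fun i => by
    induction i using Fin.cases <;> simp only [hg, Fin.cases_zero, Fin.cases_succ]
    · exact measurable_const
    · exact gaussDen_measurable d α K
  have hfam : (fun i => (B i).withDensity (g i)) = (fun t => Measure.map (w t) Pr) := by
    funext i
    induction i using Fin.cases with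
    | zero => simp only [hB, hg, Fin.cases_zero, withDensity_one, hw0]
    | succ t =>
      simp only [hB, hg, Fin.cases_succ, hwt t]
      rfl
  haveI hsf2 : ∀ i, SigmaFinite ((B i).withDensity (g i)) := fun i => by
    rw [congrFun hfam i]; infer_instance
  set G : (Fin (T+1) → Fin d → ℝ) → ℝ≥0∞ := fun η => ∏ i, g i (η i) with hG
  have hGmeas : Measurable G :=
    Finset.measurable_prod _ fun i _ => (hgmeas i).comp (measurable_pi_apply i)
  have hμ : Measure.map (fun ω t => w t ω) Pr = (Measure.pi B).withDensity G := by
    rw [iIndepFun_map_pi Pr w hwm hwindep, ← hfam, pi_withDensity_fam B g hgmeas]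
  -- trajectory identification
  have key : ∀ k, k ≤ T → ∀ ω, ∀ s : Fin (T+1),
      iterF d T φ hφ k (fun t => w t ω) s = if (s : ℕ) ≤ k then x ω s else w s ω := by
    intro k
    induction k with
    | zero =>
      intro _ ω s
      simp only [iterF, id_eq]
      by_cases h0 : (s : ℕ) ≤ 0
      · have hs0 : s = 0 := Fin.ext (Nat.le_zero.mp h0)
        rw [if_pos h0, hs0, hx0]
      · rw [if_neg h0]
    | succ k ih =>
      intro hk ω s
      have hkT : k < T := Nat.lt_of_succ_le hk
      have hih := ih (Nat.le_of_succ_le hk) ω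
      set c : Fin T := ⟨k, hkT⟩ with hc
      simp only [iterF, dif_pos hkT, Function.comp_apply]
      have happ : ∀ η s', (shearEquiv d T c φ hφ) η s' =
          if s' = c.succ then η s' + φ (η c.castSucc) else η s' := fun η s' => rfl
      rw [happ]
      by_cases hs : s = c.succ
      · subst hs
        rw [if_pos rfl, hih, hih]
        have hcv : (c : ℕ) = k := rfl
        have h1 : ¬((c.succ : Fin (T+1)) : ℕ) ≤ k := by
          rw [Fin.val_succ]; omega
        have h2 : ((c.castSucc : Fin (T+1)) : ℕ) ≤ k := by
          simp [Fin.coe_castSucc, hcv]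
        rw [if_neg h1, if_pos h2, if_pos (by simp [Fin.val_succ, hcv]),
          hxs ω c]
        exact add_comm _ _
      · rw [if_neg hs, hih]
        have hsv : (s : ℕ) ≠ k + 1 := fun hh => hs (Fin.ext (by rw [hh, Fin.val_succ]))
        rcases Nat.lt_trichotomy (s : ℕ) (k+1) with h | h | h
        · rw [if_pos (Nat.lt_succ_iff.mp h), if_pos (Nat.le_of_lt_succ h |>.trans (Nat.le_succ k))]
        · exact absurd h hsv
        · rw [if_neg (by omega), if_neg (by omega)]
  have htraj : x = iterF d T φ hφ T ∘ (fun ω t => w t ω) := by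
    funext ω s
    rw [Function.comp_apply, key T le_rfl ω s, if_pos (Nat.lt_succ_iff.mp s.isLt)]
  -- measure induction
  have hmapstep : ∀ k, k ≤ T →
      Measure.map (iterF d T φ hφ k) ((Measure.pi B).withDensity G) =
        (Measure.pi B).withDensity (fun η => G (gam d T φ k η)) := by
    intro k
    induction k with
    | zero =>
      intro _
      simp only [iterF, Measure.map_id]
      congr 1
      funext η
      rw [gam_zero]
      rfl
    | succ k ih =>
      intro hk
      have hkT : k < T := Nat.lt_of_succ_le hk
      have hih := ih (Nat.le_of_succ_le hk)
      have hcomp : iterF d T φ hφ (k+1) =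
          ⇑(shearEquiv d T ⟨k, hkT⟩ φ hφ) ∘ iterF d T φ hφ k := by
        simp only [iterF, dif_pos hkT]
      rw [hcomp, ← Measure.map_map (shearEquiv d T ⟨k, hkT⟩ φ hφ).measurable
        (iterF_measurable d T φ hφ k), hih,
        map_withDensity_equiv (f := fun η => G (gam d T φ k η))
          (shearEquiv d T ⟨k, hkT⟩ φ hφ) _
          (hGmeas.comp (gam_measurable d T φ hφ k)),
        (shearEquiv_measurePreserving m₀ ⟨k, hkT⟩ φ hφ).map_eq]
      congr 1
      funext η
      show G (gam d T φ k ((shearEquiv d T ⟨k, hkT⟩ φ hφ).symm η)) = G (gam d T φ (k+1) η)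
      rw [← gam_step d T φ hφ k hkT]
      rfl
  -- final density identification
  rw [htraj, ← Measure.map_map (iterF_measurable d T φ hφ T) (measurable_pi_lambda _ hwm),
    hμ, hmapstep T le_rfl]
  congr 1
  funext η
  rw [hG]
  show ∏ i, g i (gam d T φ T η i) = _
  rw [Fin.prod_univ_succ]
  have h0 : g 0 (gam d T φ T η 0) = 1 := by
    simp only [hg, Fin.cases_zero, Pi.one_apply]
  rw [h0, one_mul]
  refine Finset.prod_congr rfl fun t _ => ?_
  have hsucc : gam d T φ T η t.succ = η t.succ - φ (η t.castSucc) := by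
    simp only [gam, Fin.cases_succ, if_pos t.isLt]
  rw [hsucc]
  simp only [hg, Fin.cases_succ]

lemma gaussDen_factor {d : ℕ} (α : Fin d → ℝ) {K : Matrix (Fin d) (Fin d) ℝ} (hK : K.PosDef)
    (z p q : Fin d → ℝ) :
    gaussDen d α K (z - q) = gaussDen d α K (z - p) * ENNReal.ofReal (Real.exp
      (-(1 / 2) * ((q - p) ⬝ᵥ K⁻¹ *ᵥ (q - p)) + (q - p) ⬝ᵥ K⁻¹ *ᵥ (z - α - p))) := by
  have hKT : Kᵀ = K := hK.1
  have hKinvT : (K⁻¹)ᵀ = K⁻¹ := by rw [transpose_nonsing_inv, hKT]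
  have hsymm : ∀ a b : Fin d → ℝ, a ⬝ᵥ K⁻¹ *ᵥ b = b ⬝ᵥ K⁻¹ *ᵥ a := by
    intro a b
    rw [dotProduct_mulVec, ← mulVec_transpose, hKinvT, dotProduct_comm]
  have hquad : ∀ u v : Fin d → ℝ, (v - u) ⬝ᵥ K⁻¹ *ᵥ (v - u) =
      v ⬝ᵥ K⁻¹ *ᵥ v - 2*(u ⬝ᵥ K⁻¹ *ᵥ v) + u ⬝ᵥ K⁻¹ *ᵥ u := by
    intro u v
    rw [sub_dotProduct, mulVec_sub, dotProduct_sub, dotProduct_sub, hsymm v u]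
    ring
  have hC : 0 ≤ (2 * Real.pi) ^ (-(d : ℝ) / 2) * K.det ^ (-(1 : ℝ) / 2) :=
    mul_nonneg (Real.rpow_nonneg (by positivity) _) (Real.rpow_nonneg hK.det_pos.le _)
  unfold gaussDen
  rw [← ENNReal.ofReal_mul (mul_nonneg hC (Real.exp_pos _).le)]
  congr 1
  have hveq : z - q - α = (z - α - p) - (q - p) := by abel
  have hveq2 : z - p - α = z - α - p := by abel
  rw [hveq, hveq2]
  have hexp : ∀ (C A B D : ℝ), A = B + D →
      C * Real.exp A = C * Real.exp B * Real.exp D := by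
    intro C A B D h; rw [h, Real.exp_add]; ring
  refine hexp _ _ _ _ ?_
  rw [hquad]
  ring

/-- **Finite-time Girsanov theorem.** Let `w(0) ~ m₀` and `w(1),…,w(T) ~ N(α,K)` be
independent random vectors in `ℝ^d` (`K` positive definite, `T ≥ 1`), let `φ, ψ` be
measurable maps of `ℝ^d`, and define trajectories `x(0) = y(0) = w(0)`,
`x(t+1) = φ(x(t)) + w(t+1)`, `y(t+1) = ψ(y(t)) + w(t+1)`.  If `P` and `Q` are the laws of
`x` and `y` on `(ℝ^d)^{0,…,T}`, then `Q ≪ P` with density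
`dQ/dP(η) = exp ∑_{t=0}^{T−1} [ −½ (ψ(η(t))−φ(η(t)))ᵀK⁻¹(ψ(η(t))−φ(η(t)))
+ (ψ(η(t))−φ(η(t)))ᵀK⁻¹(η(t+1)−α−φ(η(t))) ]` for `P`-a.e. `η`. -/
theorem finite_time_girsanov
    {Ω : Type*} [MeasurableSpace Ω] (Pr : Measure Ω) [IsProbabilityMeasure Pr]
    (d T : ℕ) (hT : 1 ≤ T)
    (m₀ : Measure (Fin d → ℝ)) [IsProbabilityMeasure m₀]
    (α : Fin d → ℝ) (K : Matrix (Fin d) (Fin d) ℝ) (hK : K.PosDef)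
    (w : Fin (T + 1) → Ω → (Fin d → ℝ))
    (hwm : ∀ t, Measurable (w t))
    (hwindep : iIndepFun w Pr)
    (hw0 : Measure.map (w 0) Pr = m₀)
    (hwt : ∀ t : Fin T, Measure.map (w t.succ) Pr = multiGaussian d α K)
    (φ ψ : (Fin d → ℝ) → (Fin d → ℝ)) (hφ : Measurable φ) (hψ : Measurable ψ)
    (x y : Ω → Fin (T + 1) → (Fin d → ℝ)) (hxm : Measurable x) (hym : Measurable y)
    (hx0 : ∀ ω, x ω 0 = w 0 ω)
    (hxs : ∀ ω, ∀ t : Fin T, x ω t.succ = φ (x ω t.castSucc) + w t.succ ω)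
    (hy0 : ∀ ω, y ω 0 = w 0 ω)
    (hys : ∀ ω, ∀ t : Fin T, y ω t.succ = ψ (y ω t.castSucc) + w t.succ ω) :
    Measure.map y Pr ≪ Measure.map x Pr ∧
    ∀ᵐ η ∂(Measure.map x Pr),
      (Measure.map y Pr).rnDeriv (Measure.map x Pr) η =
        ENNReal.ofReal (Real.exp (∑ t : Fin T,
          (-(1 / 2) * ((ψ (η t.castSucc) - φ (η t.castSucc)) ⬝ᵥ
              K⁻¹ *ᵥ (ψ (η t.castSucc) - φ (η t.castSucc))) +
            (ψ (η t.castSucc) - φ (η t.castSucc)) ⬝ᵥ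
              K⁻¹ *ᵥ (η t.succ - α - φ (η t.castSucc))))) := by
  haveI : IsProbabilityMeasure (multiGaussian d α K) := by
    rw [← hwt ⟨0, hT⟩]; exact Measure.isProbabilityMeasure_map (hwm _).aemeasurable
  have hP := law_of_trajectory Pr d T hT m₀ α K w hwm hwindep hw0 hwt φ hφ x hxm hx0 hxs
  have hQ := law_of_trajectory Pr d T hT m₀ α K w hwm hwindep hw0 hwt ψ hψ y hym hy0 hys
  have mu : ∀ t : Fin T, Measurable fun η : Fin (T+1) → Fin d → ℝ =>
      ψ (η t.castSucc) - φ (η t.castSucc) :=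
    fun t => (hψ.comp (measurable_pi_apply _)).sub (hφ.comp (measurable_pi_apply _))
  have mv : ∀ t : Fin T, Measurable fun η : Fin (T+1) → Fin d → ℝ =>
      η t.succ - α - φ (η t.castSucc) :=
    fun t => (((measurable_pi_apply _).sub measurable_const).sub
      (hφ.comp (measurable_pi_apply _)))
  set r : (Fin (T+1) → Fin d → ℝ) → ℝ≥0∞ := fun η =>
    ENNReal.ofReal (Real.exp (∑ t : Fin T,
          (-(1 / 2) * ((ψ (η t.castSucc) - φ (η t.castSucc)) ⬝ᵥ
              K⁻¹ *ᵥ (ψ (η t.castSucc) - φ (η t.castSucc))) +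
            (ψ (η t.castSucc) - φ (η t.castSucc)) ⬝ᵥ
              K⁻¹ *ᵥ (η t.succ - α - φ (η t.castSucc))))) with hrdef
  have hrmeas : Measurable r := by
    refine ENNReal.measurable_ofReal.comp (Real.measurable_exp.comp
      (Finset.measurable_sum _ fun t _ => Measurable.add ?_ ?_))
    · exact (((measurable_dotmul K⁻¹).comp ((mu t).prodMk (mu t))).const_mul _)
    · exact ((measurable_dotmul K⁻¹).comp ((mu t).prodMk (mv t)))
  have hpφ : Measurable (fun η : Fin (T+1) → Fin d → ℝ =>
      ∏ t : Fin T, gaussDen d α K (η t.succ - φ (η t.castSucc))) :=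
    Finset.measurable_prod _ fun t _ => (gaussDen_measurable d α K).comp
      ((measurable_pi_apply _).sub (hφ.comp (measurable_pi_apply _)))
  have hkey : (fun η : Fin (T+1) → Fin d → ℝ =>
      ∏ t : Fin T, gaussDen d α K (η t.succ - ψ (η t.castSucc))) =
      (fun η => ∏ t : Fin T, gaussDen d α K (η t.succ - φ (η t.castSucc))) * r := by
    funext η
    simp only [Pi.mul_apply, hrdef]
    rw [Real.exp_sum, ENNReal.ofReal_prod_of_nonneg (fun _ _ => (Real.exp_pos _).le),
      ← Finset.prod_mul_distrib]
    exact Finset.prod_congr rfl fun t _ =>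
      gaussDen_factor α hK (η t.succ) (φ (η t.castSucc)) (ψ (η t.castSucc))
  have hQP : Measure.map y Pr = (Measure.map x Pr).withDensity r := by
    rw [hQ, hkey, withDensity_mul _ hpφ hrmeas, ← hP]
  haveI : IsProbabilityMeasure (Measure.map x Pr) :=
    Measure.isProbabilityMeasure_map hxm.aemeasurable
  constructor
  · rw [hQP]; exact withDensity_absolutelyContinuous _ _
  · rw [hQP]; exact Measure.rnDeriv_withDensity _ hrmeas
end

section
/- Exchangeability lemma (Sznitman): Let F be a measurable space, let k ≥ 1 and N ≥ k be integers, and let Q_N be a probability measure on F^N that is exchangeable, i.e. invariant under the pushforward by every coordinate permutation of F^N. Let f_1,...,f_k : F → ℝ be bounded measurable functions with |f_i| ≤ M_i. Then | ∫_{F^N} Π_{i=1}^k ( (1/N)·Σ_{j=1}^N f_i(u_j) ) dQ_N(u) − ∫_{F^N} Π_{i=1}^k f_i(u_i) dQ_N(u) | ≤ 2·(Π_{i=1}^k M_i)·( 1 − N!/((N−k)!·N^k) ). In particular, for any sequence (Q_N)_{N ≥ k} of exchangeable probability measures on F^N, the difference of the two integrals tends to 0 as N → ∞. -/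
open MeasureTheory Filter

lemma exists_perm_extend {k N : ℕ} (hkN : k ≤ N) (j : Fin k → Fin N)
    (hj : Function.Injective j) :
    ∃ s : Equiv.Perm (Fin N), ∀ i, s (Fin.castLE hkN i) = j i := by
  classical
  set c : Fin k → Fin N := Fin.castLE hkN with hc
  have hcinj : Function.Injective c := Fin.castLE_injective hkN
  have hcard1 : Fintype.card (Set.range c) = k := by
    rw [Set.card_range_of_injective hcinj, Fintype.card_fin]
  have hcard2 : Fintype.card (Set.range j) = k := by
    rw [Set.card_range_of_injective hj, Fintype.card_fin]
  have hcompl : Fintype.card ((Set.range c)ᶜ : Set (Fin N)) =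
      Fintype.card ((Set.range j)ᶜ : Set (Fin N)) := by
    rw [Fintype.card_compl_set, Fintype.card_compl_set, hcard1, hcard2]
  let r : (Set.range c : Set (Fin N)) ≃ (Set.range j : Set (Fin N)) :=
    (Equiv.ofInjective c hcinj).symm.trans (Equiv.ofInjective j hj)
  let q : ((Set.range c)ᶜ : Set (Fin N)) ≃ ((Set.range j)ᶜ : Set (Fin N)) :=
    Fintype.equivOfCardEq hcompl
  refine ⟨((Equiv.Set.sumCompl (Set.range c)).symm.trans ((r.sumCongr q).trans
    (Equiv.Set.sumCompl (Set.range j)))), fun i => ?_⟩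
  have h1 : (Equiv.Set.sumCompl (Set.range c)).symm (c i) =
      Sum.inl ⟨c i, Set.mem_range_self i⟩ :=
    Equiv.Set.sumCompl_symm_apply_of_mem (Set.mem_range_self i)
  simp only [Equiv.trans_apply, h1, Equiv.sumCongr_apply, Sum.map_inl,
    Equiv.Set.sumCompl_apply_inl]
  have : r ⟨c i, Set.mem_range_self i⟩ = ⟨j i, Set.mem_range_self i⟩ := by
    simp only [r, Equiv.trans_apply]
    have : (Equiv.ofInjective c hcinj).symm ⟨c i, Set.mem_range_self i⟩ = i := by
      apply hcinj
      rw [← Equiv.ofInjective_apply c hcinj, Equiv.symm_apply_apply]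
    rw [this, Equiv.ofInjective_apply]
  rw [this]

lemma sznitman_bound {F : Type*} [MeasurableSpace F] (k : ℕ) (hk : 1 ≤ k)
    (f : Fin k → F → ℝ) (M : Fin k → ℝ)
    (hfm : ∀ i, Measurable (f i)) (hfb : ∀ i x, |f i x| ≤ M i)
    (N : ℕ) (hkN : k ≤ N) (QN : Measure (Fin N → F)) [IsProbabilityMeasure QN]
    (hexch : ∀ s : Equiv.Perm (Fin N), Measure.map (fun u i => u (s i)) QN = QN) :
    |(∫ u, ∏ i : Fin k, ((1 / (N : ℝ)) * ∑ j : Fin N, f i (u j)) ∂QN) -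
        ∫ u, ∏ i : Fin k, f i (u (Fin.castLE hkN i)) ∂QN| ≤
      2 * (∏ i, M i) * (1 - (N.descFactorial k : ℝ) / (N : ℝ) ^ k) := by
  classical
  have hN1 : 1 ≤ N := hk.trans hkN
  have hNne : (N : ℝ) ≠ 0 := Nat.cast_ne_zero.mpr (by omega)
  have hNk : (N : ℝ) ^ k ≠ 0 := pow_ne_zero _ hNne
  have hFne : Nonempty F := by
    by_contra h
    have hE : IsEmpty F := not_nonempty_iff.mp h
    have hE2 : IsEmpty (Fin N → F) := ⟨fun u => hE.false (u ⟨0, by omega⟩)⟩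
    have h1 := measure_univ (μ := QN)
    rw [Set.univ_eq_empty_iff.mpr hE2, measure_empty] at h1
    exact zero_ne_one h1
  obtain ⟨x0⟩ := hFne
  have hM : ∀ i, 0 ≤ M i := fun i => (abs_nonneg _).trans (hfb i x0)
  set P := ∏ i, M i with hPdef
  have hP : 0 ≤ P := Finset.prod_nonneg fun i _ => hM i
  have hGm : ∀ j : Fin k → Fin N, Measurable fun u : Fin N → F => ∏ i, f i (u (j i)) :=
    fun j => Finset.measurable_prod _ fun i _ => (hfm i).comp (measurable_pi_apply (j i))
  have hGb : ∀ (j : Fin k → Fin N) (u : Fin N → F), |∏ i, f i (u (j i))| ≤ P := by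
    intro j u
    rw [Finset.abs_prod]
    exact Finset.prod_le_prod (fun i _ => abs_nonneg _) fun i _ => hfb i _
  have hGi : ∀ j : Fin k → Fin N, Integrable (fun u => ∏ i, f i (u (j i))) QN :=
    fun j => ⟨(hGm j).aestronglyMeasurable,
      HasFiniteIntegral.of_bounded (C := P)
        (ae_of_all _ fun u => by simpa only [Real.norm_eq_abs] using hGb j u)⟩
  have hInorm : ∀ j : Fin k → Fin N, |∫ u, ∏ i, f i (u (j i)) ∂QN| ≤ P := by
    intro j
    have h := norm_integral_le_of_norm_le_const (μ := QN)
      (f := fun u => ∏ i, f i (u (j i))) (C := P)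
      (ae_of_all _ fun u => by simpa only [Real.norm_eq_abs] using hGb j u)
    simpa [Real.norm_eq_abs] using h
  have hIc : ∀ j : Fin k → Fin N, Function.Injective j →
      (∫ u, ∏ i, f i (u (j i)) ∂QN) = ∫ u, ∏ i, f i (u (Fin.castLE hkN i)) ∂QN := by
    intro j hj
    obtain ⟨s, hs⟩ := exists_perm_extend hkN j hj
    have hTm : Measurable fun (u : Fin N → F) (i : Fin N) => u (s i) :=
      measurable_pi_lambda _ fun i => measurable_pi_apply (s i)
    have h := integral_map (μ := QN) (φ := fun (u : Fin N → F) (i : Fin N) => u (s i))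
      hTm.aemeasurable
      (f := fun u : Fin N → F => ∏ i, f i (u (Fin.castLE hkN i)))
      (by rw [hexch s]; exact (hGm _).aestronglyMeasurable)
    rw [hexch s] at h
    calc ∫ u, ∏ i, f i (u (j i)) ∂QN
        = ∫ u, ∏ i, f i (u (s (Fin.castLE hkN i))) ∂QN := by simp_rw [hs]
      _ = ∫ u, ∏ i, f i (u (Fin.castLE hkN i)) ∂QN := h.symm
  have hexp : (∫ u, ∏ i : Fin k, ((1 / (N : ℝ)) * ∑ jj : Fin N, f i (u jj)) ∂QN)
      = ((1 : ℝ) / N) ^ k * ∑ j : Fin k → Fin N, ∫ u, ∏ i, f i (u (j i)) ∂QN := by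
    have hpt : ∀ u : Fin N → F,
        (∏ i : Fin k, ((1 / (N : ℝ)) * ∑ jj : Fin N, f i (u jj)))
        = ((1 : ℝ) / N) ^ k * ∑ j : Fin k → Fin N, ∏ i, f i (u (j i)) := by
      intro u
      rw [Finset.prod_mul_distrib, Finset.prod_const, Finset.card_univ, Fintype.card_fin]
      congr 1
      exact Fintype.prod_sum fun i jj => f i (u jj)
    simp_rw [hpt]
    rw [integral_const_mul, integral_finset_sum _ fun j _ => hGi j]
  set c := ∫ u, ∏ i, f i (u (Fin.castLE hkN i)) ∂QN with hcdef
  have hdiff : (∫ u, ∏ i : Fin k, ((1 / (N : ℝ)) * ∑ jj : Fin N, f i (u jj)) ∂QN) - c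
      = ((1 : ℝ) / N) ^ k * ∑ j : Fin k → Fin N,
          ((∫ u, ∏ i, f i (u (j i)) ∂QN) - c) := by
    rw [hexp, Finset.sum_sub_distrib, mul_sub]
    congr 1
    rw [Finset.sum_const, Finset.card_univ, Fintype.card_fun, Fintype.card_fin,
      Fintype.card_fin, nsmul_eq_mul]
    push_cast
    field_simp
    linear_combination (-c) * (mul_inv_cancel₀ hNk)
  have hterm : ∀ j : Fin k → Fin N, |(∫ u, ∏ i, f i (u (j i)) ∂QN) - c| ≤ 2 * P := by
    intro j
    calc |(∫ u, ∏ i, f i (u (j i)) ∂QN) - c| ≤ |∫ u, ∏ i, f i (u (j i)) ∂QN| + |c| :=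
        abs_sub _ _
      _ ≤ P + P := add_le_add (hInorm j) (hInorm _)
      _ = 2 * P := (two_mul P).symm
  have hcardinj : (Finset.univ.filter fun j : Fin k → Fin N => Function.Injective j).card
      = N.descFactorial k := by
    rw [← Fintype.card_subtype,
      Fintype.card_congr (Equiv.subtypeInjectiveEquivEmbedding (Fin k) (Fin N)),
      Fintype.card_embedding_eq, Fintype.card_fin, Fintype.card_fin]
  have hcardnot : (Finset.univ.filter fun j : Fin k → Fin N => ¬ Function.Injective j).card
      = N ^ k - N.descFactorial k := by
    have h := Finset.card_filter_add_card_filter_not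
      (s := (Finset.univ : Finset (Fin k → Fin N)))
      (p := fun j : Fin k → Fin N => Function.Injective j)
    rw [hcardinj, Finset.card_univ, Fintype.card_fun, Fintype.card_fin, Fintype.card_fin] at h
    omega
  have hsum : |∑ j : Fin k → Fin N, ((∫ u, ∏ i, f i (u (j i)) ∂QN) - c)|
      ≤ ((N ^ k - N.descFactorial k : ℕ) : ℝ) * (2 * P) := by
    have hzero : ∀ j ∈ Finset.univ.filter (fun j : Fin k → Fin N => Function.Injective j),
        ((∫ u, ∏ i, f i (u (j i)) ∂QN) - c) = 0 :=
      fun j hj => sub_eq_zero.mpr (hIc j (Finset.mem_filter.mp hj).2)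
    rw [← Finset.sum_filter_add_sum_filter_not Finset.univ
      (fun j : Fin k → Fin N => Function.Injective j), Finset.sum_eq_zero hzero, zero_add]
    calc |∑ j ∈ Finset.univ.filter (fun j : Fin k → Fin N => ¬ Function.Injective j),
          ((∫ u, ∏ i, f i (u (j i)) ∂QN) - c)|
        ≤ ∑ j ∈ Finset.univ.filter (fun j : Fin k → Fin N => ¬ Function.Injective j),
          |(∫ u, ∏ i, f i (u (j i)) ∂QN) - c| := Finset.abs_sum_le_sum_abs _ _
      _ ≤ ∑ _j ∈ Finset.univ.filter (fun j : Fin k → Fin N => ¬ Function.Injective j),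
          (2 * P) := Finset.sum_le_sum fun j _ => hterm j
      _ = ((N ^ k - N.descFactorial k : ℕ) : ℝ) * (2 * P) := by
          rw [Finset.sum_const, hcardnot, nsmul_eq_mul]
  have hdesc : (N.descFactorial k : ℝ) ≤ (N : ℝ) ^ k := by
    exact_mod_cast Nat.descFactorial_le_pow N k
  calc |(∫ u, ∏ i : Fin k, ((1 / (N : ℝ)) * ∑ jj : Fin N, f i (u jj)) ∂QN) - c|
      = ((1 : ℝ) / N) ^ k * |∑ j : Fin k → Fin N,
          ((∫ u, ∏ i, f i (u (j i)) ∂QN) - c)| := by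
        rw [hdiff, abs_mul, abs_of_nonneg (by positivity)]
    _ ≤ ((1 : ℝ) / N) ^ k * (((N ^ k - N.descFactorial k : ℕ) : ℝ) * (2 * P)) := by
        exact mul_le_mul_of_nonneg_left hsum (by positivity)
    _ = 2 * P * (1 - (N.descFactorial k : ℝ) / (N : ℝ) ^ k) := by
        rw [Nat.cast_sub (Nat.descFactorial_le_pow N k)]
        push_cast
        linear_combination (2 * P) * (mul_inv_cancel₀ hNk)

/-- **Exchangeability lemma (Sznitman).** Let `(Q_N)` be exchangeable probability measures
on `F^N` and let `f_1,…,f_k : F → ℝ` be measurable with `|f_i| ≤ M_i`.  Then for every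
`N ≥ k`,
`| ∫ ∏_i (N⁻¹ ∑_j f_i(u_j)) dQ_N − ∫ ∏_i f_i(u_i) dQ_N |
  ≤ 2 (∏_i M_i) (1 − N!/((N−k)!·N^k))`,
and in particular the difference of the two integrals tends to `0` as `N → ∞`. -/
theorem sznitman_exchangeability
    {F : Type*} [MeasurableSpace F] (k : ℕ) (hk : 1 ≤ k)
    (f : Fin k → F → ℝ) (M : Fin k → ℝ)
    (hfm : ∀ i, Measurable (f i)) (hfb : ∀ i x, |f i x| ≤ M i)
    (Q : (N : ℕ) → Measure (Fin N → F))
    (hprob : ∀ N, k ≤ N → IsProbabilityMeasure (Q N))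
    (hexch : ∀ (N : ℕ), k ≤ N → ∀ s : Equiv.Perm (Fin N),
      Measure.map (fun u i => u (s i)) (Q N) = Q N) :
    (∀ (N : ℕ) (hkN : k ≤ N),
      |(∫ u, ∏ i : Fin k, ((1 / (N : ℝ)) * ∑ j : Fin N, f i (u j)) ∂(Q N)) -
          ∫ u, ∏ i : Fin k, f i (u (Fin.castLE hkN i)) ∂(Q N)| ≤
        2 * (∏ i, M i) *
          (1 - (N.factorial : ℝ) / ((N - k).factorial * (N : ℝ) ^ k))) ∧
    Tendsto
      (fun N : ℕ =>
        if hkN : k ≤ N then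
          (∫ u, ∏ i : Fin k, ((1 / (N : ℝ)) * ∑ j : Fin N, f i (u j)) ∂(Q N)) -
            ∫ u, ∏ i : Fin k, f i (u (Fin.castLE hkN i)) ∂(Q N)
        else 0)
      atTop (nhds 0) := by
  classical
  have hfact : ∀ (N : ℕ), k ≤ N → (N.factorial : ℝ) / ((N - k).factorial * (N : ℝ) ^ k)
      = (N.descFactorial k : ℝ) / (N : ℝ) ^ k := by
    intro N hkN
    have h := Nat.factorial_mul_descFactorial hkN
    have h2 : (N.factorial : ℝ) = ((N - k).factorial : ℝ) * (N.descFactorial k : ℝ) := by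
      exact_mod_cast h.symm
    rw [h2, mul_div_mul_left _ _
      (Nat.cast_ne_zero.mpr (Nat.factorial_ne_zero (N - k)))]
  have hbound : ∀ (N : ℕ) (hkN : k ≤ N),
      |(∫ u, ∏ i : Fin k, ((1 / (N : ℝ)) * ∑ j : Fin N, f i (u j)) ∂(Q N)) -
          ∫ u, ∏ i : Fin k, f i (u (Fin.castLE hkN i)) ∂(Q N)| ≤
        2 * (∏ i, M i) * (1 - (N.descFactorial k : ℝ) / (N : ℝ) ^ k) := by
    intro N hkN
    haveI := hprob N hkN
    exact sznitman_bound k hk f M hfm hfb N hkN (Q N) (hexch N hkN)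
  have hM : ∀ i, 0 ≤ M i := by
    haveI := hprob k le_rfl
    have hFne : Nonempty F := by
      by_contra h
      have hE : IsEmpty F := not_nonempty_iff.mp h
      have hE2 : IsEmpty (Fin k → F) := ⟨fun u => hE.false (u ⟨0, by omega⟩)⟩
      have h1 := measure_univ (μ := Q k)
      rw [Set.univ_eq_empty_iff.mpr hE2, measure_empty] at h1
      exact zero_ne_one h1
    obtain ⟨x0⟩ := hFne
    exact fun i => (abs_nonneg _).trans (hfb i x0)
  have hP : 0 ≤ ∏ i, M i := Finset.prod_nonneg fun i _ => hM i
  constructor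
  · intro N hkN
    rw [hfact N hkN]
    exact hbound N hkN
  · have hb : ∀ N : ℕ,
        ‖(if hkN : k ≤ N then
            (∫ u, ∏ i : Fin k, ((1 / (N : ℝ)) * ∑ j : Fin N, f i (u j)) ∂(Q N)) -
              ∫ u, ∏ i : Fin k, f i (u (Fin.castLE hkN i)) ∂(Q N)
          else 0)‖
        ≤ 2 * (∏ i, M i) * (1 - (N.descFactorial k : ℝ) / (N : ℝ) ^ k) := by
      intro N
      by_cases hkN : k ≤ N
      · rw [dif_pos hkN]
        simpa only [Real.norm_eq_abs] using hbound N hkN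
      · rw [dif_neg hkN, norm_zero]
        have hd : N.descFactorial k = 0 := Nat.descFactorial_eq_zero_iff_lt.mpr (by omega)
        rw [hd]
        simp only [Nat.cast_zero, zero_div, sub_zero, mul_one]
        positivity
    refine squeeze_zero_norm hb ?_
    have hr : Tendsto (fun N : ℕ => (N.descFactorial k : ℝ) / (N : ℝ) ^ k) atTop (nhds 1) := by
      have h1 : Tendsto (fun N : ℕ => ∏ i ∈ Finset.range k, (1 - (i : ℝ) / (N : ℝ)))
          atTop (nhds 1) := by
        have h2 := tendsto_finset_prod (Finset.range k)
          (f := fun (i : ℕ) (N : ℕ) => 1 - (i : ℝ) / (N : ℝ)) (a := fun _ => (1 : ℝ))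
          (x := atTop)
          (fun i _ => by
            simpa using tendsto_const_nhds.sub (tendsto_const_div_atTop_nhds_zero_nat (i : ℝ)))
        simpa using h2
      refine h1.congr' ?_
      filter_upwards [eventually_ge_atTop k] with N hN
      have hN1 : 1 ≤ N := hk.trans hN
      have hNne : (N : ℝ) ≠ 0 := Nat.cast_ne_zero.mpr (by omega)
      rw [Nat.descFactorial_eq_prod_range, Nat.cast_prod]
      have hcast : ∀ i ∈ Finset.range k, ((N - i : ℕ) : ℝ) = (N : ℝ) - i := by
        intro i hi
        have : i ≤ N := le_trans (le_of_lt (Finset.mem_range.mp hi)) hN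
        exact Nat.cast_sub this
      rw [Finset.prod_congr rfl hcast]
      have hpow : (N : ℝ) ^ k = ∏ _i ∈ Finset.range k, (N : ℝ) := by
        rw [Finset.prod_const, Finset.card_range]
      rw [hpow, ← Finset.prod_div_distrib]
      refine Finset.prod_congr rfl fun i _ => ?_
      rw [sub_div, div_self hNne]
    have h3 : Tendsto (fun N : ℕ => 2 * (∏ i, M i) *
        (1 - (N.descFactorial k : ℝ) / (N : ℝ) ^ k)) atTop (nhds (2 * (∏ i, M i) * (1 - 1))) :=
      tendsto_const_nhds.mul (tendsto_const_nhds.sub hr)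
    simpa using h3
end

section
/- Propagation of chaos: Let F be a Polish space, and for each N ≥ 1 let Q_N be an exchangeable probability measure on F^N. For u = (u_1,...,u_N) ∈ F^N let μ_u = (1/N)·Σ_{i=1}^N δ_{u_i} denote the empirical measure, an element of the space P(F) of Borel probability measures on F equipped with the topology of weak convergence. Let μ₀ ∈ P(F) and assume that for every bounded continuous function Φ : P(F) → ℝ, ∫_{F^N} Φ(μ_u) dQ_N(u) → Φ(μ₀) as N → ∞. Then for every k ≥ 1 and all bounded continuous functions f_1,...,f_k : F → ℝ, ∫_{F^N} Π_{i=1}^k f_i(u_i) dQ_N(u) → Π_{i=1}^k ∫_F f_i(η) dμ₀(η) as N → ∞; that is, the k-dimensional marginals of Q_N converge weakly to the product measure μ₀^{⊗k}. -/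
open MeasureTheory Filter
open scoped ENNReal

noncomputable def empiricalMeasure {F : Type*} [MeasurableSpace F] {N : ℕ} (hN : 0 < N)
    (u : Fin N → F) : ProbabilityMeasure F :=
  ⟨(N : ℝ≥0∞)⁻¹ • ∑ i, Measure.dirac (u i), ⟨by
    simp only [Measure.smul_apply, Measure.coe_finset_sum, Finset.sum_apply,
      smul_eq_mul, measure_univ, Finset.sum_const, Finset.card_univ, Fintype.card_fin,
      nsmul_eq_mul, mul_one]
    exact ENNReal.inv_mul_cancel (Nat.cast_ne_zero.mpr hN.ne') (ENNReal.natCast_ne_top N)⟩⟩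

lemma exists_perm_comp {α β : Type*} [Fintype α] [Fintype β] (j₁ j₂ : α → β)
    (h₁ : Function.Injective j₁) (h₂ : Function.Injective j₂) :
    ∃ σ : Equiv.Perm β, ∀ a, σ (j₁ a) = j₂ a := by
  classical
  have hcard : Fintype.card ((Set.range j₁)ᶜ : Set β) = Fintype.card ((Set.range j₂)ᶜ : Set β) := by
    have c1 : Fintype.card (Set.range j₁) = Fintype.card (Set.range j₂) := by
      rw [Set.card_range_of_injective h₁, Set.card_range_of_injective h₂]
    have t1 := Fintype.card_compl_set (Set.range j₁)
    have t2 := Fintype.card_compl_set (Set.range j₂)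
    omega
  let r : (Set.range j₁ : Set β) ≃ (Set.range j₂ : Set β) :=
    (Equiv.ofInjective j₁ h₁).symm.trans (Equiv.ofInjective j₂ h₂)
  let c : ((Set.range j₁)ᶜ : Set β) ≃ ((Set.range j₂)ᶜ : Set β) := Fintype.equivOfCardEq hcard
  refine ⟨(Equiv.Set.sumCompl (Set.range j₁)).symm.trans
    ((Equiv.sumCongr r c).trans (Equiv.Set.sumCompl (Set.range j₂))), fun a => ?_⟩
  have hmem : j₁ a ∈ Set.range j₁ := Set.mem_range_self a
  simp only [Equiv.trans_apply, Equiv.Set.sumCompl_symm_apply_of_mem hmem,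
    Equiv.sumCongr_apply, Sum.map_inl, Equiv.Set.sumCompl_apply_inl]
  show ((r ⟨j₁ a, hmem⟩ : (Set.range j₂ : Set β)) : β) = j₂ a
  have h : (⟨j₁ a, hmem⟩ : (Set.range j₁ : Set β)) = Equiv.ofInjective j₁ h₁ a := rfl
  rw [h]
  show ((Equiv.ofInjective j₂ h₂) ((Equiv.ofInjective j₁ h₁).symm ((Equiv.ofInjective j₁ h₁) a)) : β) = j₂ a
  rw [Equiv.symm_apply_apply]
  rfl

lemma integral_empirical {F : Type*} [TopologicalSpace F] [MeasurableSpace F]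
    [OpensMeasurableSpace F] {N : ℕ} (hN : 0 < N) (u : Fin N → F) (g : F → ℝ)
    (hg : Continuous g) :
    ∫ x, g x ∂(empiricalMeasure hN u : Measure F) = (N : ℝ)⁻¹ * ∑ j, g (u j) := by
  show ∫ x, g x ∂((N : ℝ≥0∞)⁻¹ • ∑ i, Measure.dirac (u i)) = _
  rw [integral_smul_measure, integral_finset_sum_measure (fun i _ => ?_)]
  · simp only [integral_dirac' g _ hg.stronglyMeasurable, smul_eq_mul,
      ENNReal.toReal_inv, ENNReal.toReal_natCast]
  · exact ⟨hg.stronglyMeasurable.aestronglyMeasurable, by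
      simpa [HasFiniteIntegral] using (by
        rw [lintegral_dirac' _ hg.measurable.enorm]
        exact enorm_lt_top : ∫⁻ x, ‖g x‖ₑ ∂(Measure.dirac (u i)) < ⊤)⟩

/-- **Propagation of chaos.** Let `F` be a Polish space and `(Q_N)` exchangeable
probability measures on `F^N`.  If the empirical measures converge in the sense that
`∫ Φ(μ_u) dQ_N(u) → Φ(μ₀)` for every bounded continuous `Φ : P(F) → ℝ`, then for every
`k ≥ 1` and all bounded continuous `f_1,…,f_k : F → ℝ`,
`∫ ∏_{i=1}^k f_i(u_i) dQ_N(u) → ∏_{i=1}^k ∫ f_i dμ₀`, i.e. the `k`-dimensional marginals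
of `Q_N` converge weakly to `μ₀^{⊗k}`. -/
theorem propagation_of_chaos
    {F : Type*} [TopologicalSpace F] [PolishSpace F] [MeasurableSpace F] [BorelSpace F]
    (Q : (N : ℕ) → Measure (Fin N → F))
    (hprob : ∀ N, 1 ≤ N → IsProbabilityMeasure (Q N))
    (hexch : ∀ N, 1 ≤ N → ∀ s : Equiv.Perm (Fin N),
      Measure.map (fun u i => u (s i)) (Q N) = Q N)
    (μ₀ : ProbabilityMeasure F)
    (hconv : ∀ Φ : ProbabilityMeasure F → ℝ, Continuous Φ → (∃ C, ∀ ν, |Φ ν| ≤ C) →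
      Tendsto
        (fun N : ℕ => if h : 0 < N then ∫ u, Φ (empiricalMeasure h u) ∂(Q N) else 0)
        atTop (nhds (Φ μ₀)))
    (k : ℕ) (hk : 1 ≤ k) (f : Fin k → F → ℝ)
    (hfc : ∀ i, Continuous (f i)) (hfb : ∀ i, ∃ C, ∀ x, |f i x| ≤ C) :
    Tendsto
      (fun N : ℕ =>
        if h : k ≤ N then
          ∫ u, ∏ i : Fin k, f i (u (Fin.castLE h i)) ∂(Q N)
        else 0)
      atTop (nhds (∏ i : Fin k, ∫ x, f i x ∂(μ₀ : Measure F))) := by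
  classical
  choose C0 hC0 using hfb
  set C : Fin k → ℝ := fun i => max (C0 i) 0 with hCdef
  have hC : ∀ i x, |f i x| ≤ C i := fun i x => (hC0 i x).trans (le_max_left _ _)
  have hCnn : ∀ i, 0 ≤ C i := fun i => le_max_right _ _
  set CP : ℝ := ∏ i, C i with hCPdef
  have hCPnn : 0 ≤ CP := Finset.prod_nonneg fun i _ => hCnn i
  set fb : Fin k → BoundedContinuousFunction F ℝ := fun i =>
    BoundedContinuousFunction.ofNormedAddCommGroup (f i) (hfc i) (C i)
      (fun x => by rw [Real.norm_eq_abs]; exact hC i x) with hfbdef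
  set Φ : ProbabilityMeasure F → ℝ := fun ν => ∏ i, ∫ x, f i x ∂(ν : Measure F) with hΦdef
  -- continuity of Φ
  have hΦc : Continuous Φ := by
    apply continuous_finset_prod
    intro i _
    exact ProbabilityMeasure.continuous_integral_boundedContinuousFunction (fb i)
  -- bound for Φ
  have hΦint : ∀ (ν : Measure F) [IsProbabilityMeasure ν] (i : Fin k),
      |∫ x, f i x ∂ν| ≤ C i := by
    intro ν _ i
    have := norm_integral_le_of_norm_le_const (μ := ν) (f := f i) (C := C i)
      (ae_of_all _ fun x => by rw [Real.norm_eq_abs]; exact hC i x)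
    simpa [Real.norm_eq_abs, measure_univ] using this
  have hΦb : ∀ ν, |Φ ν| ≤ CP := by
    intro ν
    rw [hΦdef]
    simp only
    rw [Finset.abs_prod]
    exact Finset.prod_le_prod (fun i _ => abs_nonneg _) (fun i _ => hΦint (ν : Measure F) i)
  have hB := hconv Φ hΦc ⟨CP, hΦb⟩
  set AA : ℕ → ℝ := fun N : ℕ =>
    if h : k ≤ N then ∫ u, ∏ i : Fin k, f i (u (Fin.castLE h i)) ∂(Q N) else 0 with hAAdef
  set BB : ℕ → ℝ := fun N : ℕ =>
    if h : 0 < N then ∫ u, Φ (empiricalMeasure h u) ∂(Q N) else 0 with hBBdef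
  set r : ℕ → ℝ := fun N => (N.descFactorial k : ℝ) / (N : ℝ) ^ k with hrdef
  have key : ∀ N, k ≤ N → |BB N - r N * AA N| ≤ (1 - r N) * CP ∧ |AA N| ≤ CP := by
    intro N hN
    have h1 : 1 ≤ N := hk.trans hN
    have hNpos : 0 < N := h1
    haveI := hprob N h1
    have hNk : (0:ℝ) < (N:ℝ) ^ k := pow_pos (by exact_mod_cast hNpos) k
    set I : (Fin k → Fin N) → ℝ := fun j => ∫ u, ∏ i, f i (u (j i)) ∂(Q N) with hIdef
    have hmeas : ∀ j : Fin k → Fin N, Measurable fun u : Fin N → F => ∏ i, f i (u (j i)) :=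
      fun j => Finset.measurable_prod _ fun i _ =>
        ((hfc i).measurable).comp (measurable_pi_apply (j i))
    have hbd : ∀ (j : Fin k → Fin N) (u : Fin N → F), |∏ i, f i (u (j i))| ≤ CP := fun j u => by
      rw [Finset.abs_prod]
      exact Finset.prod_le_prod (fun i _ => abs_nonneg _) (fun i _ => hC i _)
    have hint : ∀ j : Fin k → Fin N,
        Integrable (fun u : Fin N → F => ∏ i, f i (u (j i))) (Q N) := fun j =>
      ⟨(hmeas j).aestronglyMeasurable,
        HasFiniteIntegral.of_bounded (C := CP) (ae_of_all _ fun u => by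
          rw [Real.norm_eq_abs]; exact hbd j u)⟩
    have hIle : ∀ j, |I j| ≤ CP := fun j => by
      have := norm_integral_le_of_norm_le_const (μ := Q N) (C := CP)
        (ae_of_all _ fun u => by rw [Real.norm_eq_abs]; exact hbd j u)
      simpa [Real.norm_eq_abs, measure_univ] using this
    have hinj : ∀ j : Fin k → Fin N, Function.Injective j → I j = I (Fin.castLE hN) := by
      intro j hj
      obtain ⟨σ, hσ⟩ := exists_perm_comp (Fin.castLE hN) j (Fin.castLE_injective hN) hj
      have hT : Measurable fun u : Fin N → F => fun i => u (σ i) :=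
        measurable_pi_lambda _ fun i => measurable_pi_apply _
      have hjf : j = fun a => σ (Fin.castLE hN a) := funext fun a => (hσ a).symm
      subst hjf
      have step : I (Fin.castLE hN)
          = ∫ v, ∏ i, f i (v (Fin.castLE hN i))
              ∂(Measure.map (fun u i => u (σ i)) (Q N)) := by
        rw [hexch N h1 σ]
      rw [step, integral_map hT.aemeasurable (hmeas (Fin.castLE hN)).aestronglyMeasurable]
    set d : ℕ := N.descFactorial k with hddef
    set Sbad : Finset (Fin k → Fin N) :=
      Finset.univ.filter (fun j : Fin k → Fin N => ¬ Function.Injective j) with hSbaddef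
    have hcard : (Finset.univ.filter
        (fun j : Fin k → Fin N => Function.Injective j)).card = d := by
      rw [← Fintype.card_subtype,
        Fintype.card_congr (Equiv.subtypeInjectiveEquivEmbedding (Fin k) (Fin N))]
      simp [Fintype.card_embedding_eq, hddef]
    have hcardall : (Finset.univ : Finset (Fin k → Fin N)).card = N ^ k := by
      simp [Finset.card_univ]
    have hdle : d ≤ N ^ k := Nat.descFactorial_le_pow N k
    have hcard2 : Sbad.card = N ^ k - d := by
      rw [hSbaddef, Finset.filter_not, Finset.card_sdiff_of_subset (Finset.filter_subset _ _),
        hcardall, hcard]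
    have hsplit : ∑ j : Fin k → Fin N, I j
        = (d : ℝ) * I (Fin.castLE hN) + ∑ j ∈ Sbad, I j := by
      rw [← Finset.sum_filter_add_sum_filter_not Finset.univ
        (fun j : Fin k → Fin N => Function.Injective j) I]
      congr 1
      rw [Finset.sum_congr rfl (fun j hj => hinj j (Finset.mem_filter.mp hj).2),
        Finset.sum_const, hcard, nsmul_eq_mul]
    have hBBval : BB N = ((N:ℝ) ^ k)⁻¹ * ∑ j : Fin k → Fin N, I j := by
      have step1 : ∀ u : Fin N → F, Φ (empiricalMeasure hNpos u)
          = ((N:ℝ) ^ k)⁻¹ * ∑ j : Fin k → Fin N, ∏ i, f i (u (j i)) := by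
        intro u
        rw [hΦdef]
        simp only
        have hemp : ∀ i : Fin k, ∫ x, f i x ∂(empiricalMeasure hNpos u : Measure F)
            = (N:ℝ)⁻¹ * ∑ m, f i (u m) :=
          fun i => integral_empirical hNpos u (f i) (hfc i)
        simp_rw [hemp]
        rw [Finset.prod_mul_distrib, Finset.prod_const, Finset.card_univ, Fintype.card_fin,
          Finset.prod_univ_sum]
        simp [Fintype.piFinset_univ, inv_pow]
      have : BB N = ∫ u, Φ (empiricalMeasure hNpos u) ∂(Q N) := by
        rw [hBBdef]; simp only [dif_pos hNpos]
      rw [this, integral_congr_ae (ae_of_all _ step1), integral_const_mul,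
        integral_finset_sum _ (fun j _ => hint j)]
    have hAN : AA N = I (Fin.castLE hN) := by
      rw [hAAdef]; simp only [dif_pos hN]
      rfl
    have hnoninj : |∑ j ∈ Sbad, I j| ≤ ((N ^ k - d : ℕ) : ℝ) * CP := by
      calc |∑ j ∈ Sbad, I j| ≤ ∑ j ∈ Sbad, |I j| := Finset.abs_sum_le_sum_abs _ _
        _ ≤ Sbad.card • CP := Finset.sum_le_card_nsmul _ _ CP (fun j _ => hIle j)
        _ = ((N ^ k - d : ℕ) : ℝ) * CP := by rw [hcard2, nsmul_eq_mul]
    have hr1 : r N = (d : ℝ) / (N:ℝ) ^ k := rfl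
    constructor
    · have hdiff : BB N - r N * AA N = ((N:ℝ) ^ k)⁻¹ * ∑ j ∈ Sbad, I j := by
        rw [hBBval, hAN, hsplit, hr1]
        field_simp
        ring
      have h1r : 1 - r N = ((N ^ k - d : ℕ) : ℝ) / (N:ℝ) ^ k := by
        rw [hr1, Nat.cast_sub hdle]
        field_simp
        rw [Nat.cast_pow]
      rw [hdiff, h1r, abs_mul, abs_inv, abs_of_pos hNk]
      calc ((N:ℝ) ^ k)⁻¹ * |∑ j ∈ Sbad, I j|
          ≤ ((N:ℝ) ^ k)⁻¹ * (((N ^ k - d : ℕ) : ℝ) * CP) :=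
            mul_le_mul_of_nonneg_left hnoninj (inv_nonneg.mpr hNk.le)
        _ = ((N ^ k - d : ℕ) : ℝ) / (N:ℝ) ^ k * CP := by ring
    · rw [hAN]; exact hIle _
  have hrtend : Tendsto r atTop (nhds 1) := by
    have hev : ∀ᶠ N : ℕ in atTop, r N = ∏ i ∈ Finset.range k, (1 - (i:ℝ)/(N:ℝ)) := by
      filter_upwards [eventually_ge_atTop k] with N hN
      have hNpos : 0 < N := lt_of_lt_of_le hk hN
      have hN0 : (N:ℝ) ≠ 0 := Nat.cast_ne_zero.mpr hNpos.ne'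
      rw [hrdef]
      simp only
      rw [Nat.descFactorial_eq_prod_range, Nat.cast_prod]
      have hpow : (N:ℝ) ^ k = ∏ _i ∈ Finset.range k, (N:ℝ) := by
        rw [Finset.prod_const, Finset.card_range]
      rw [hpow, ← Finset.prod_div_distrib]
      refine Finset.prod_congr rfl (fun i hi => ?_)
      rw [Nat.cast_sub (le_of_lt (lt_of_lt_of_le (Finset.mem_range.mp hi) hN))]
      field_simp
    have hlim : Tendsto (fun N : ℕ => ∏ i ∈ Finset.range k, (1 - (i:ℝ)/(N:ℝ)))
        atTop (nhds (∏ _i ∈ Finset.range k, (1:ℝ))) := by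
      refine tendsto_finset_prod _ (fun i _ => ?_)
      have h0 : Tendsto (fun N : ℕ => (i:ℝ)/(N:ℝ)) atTop (nhds 0) :=
        tendsto_const_div_atTop_nhds_zero_nat (i:ℝ)
      have h1 : Tendsto (fun N : ℕ => 1 - (i:ℝ)/(N:ℝ)) atTop (nhds (1 - 0)) :=
        tendsto_const_nhds.sub h0
      simpa using h1
    rw [Finset.prod_const_one] at hlim
    exact hlim.congr' (Filter.EventuallyEq.symm hev)
  have htend0 : Tendsto (fun N => AA N - BB N) atTop (nhds 0) := by
    apply squeeze_zero_norm' (a := fun N => 2 * CP * (1 - r N))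
    · filter_upwards [eventually_ge_atTop k] with N hN
      obtain ⟨h1, h2⟩ := key N hN
      have hNpos : 0 < N := lt_of_lt_of_le hk hN
      have hrle : r N ≤ 1 := by
        rw [hrdef]
        simp only
        apply div_le_one_of_le₀
        · exact_mod_cast Nat.descFactorial_le_pow N k
        · positivity
      have e1 : AA N - r N * AA N = (1 - r N) * AA N := by ring
      calc ‖AA N - BB N‖ = |AA N - BB N| := Real.norm_eq_abs _
        _ ≤ |AA N - r N * AA N| + |r N * AA N - BB N| := abs_sub_le _ _ _
        _ ≤ (1 - r N) * CP + (1 - r N) * CP := by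
            refine add_le_add ?_ (by rw [abs_sub_comm]; exact h1)
            rw [e1, abs_mul, abs_of_nonneg (by linarith)]
            exact mul_le_mul_of_nonneg_left h2 (by linarith)
        _ = 2 * CP * (1 - r N) := by ring
    · have : Tendsto (fun N => 2 * CP * (1 - r N)) atTop (nhds (2 * CP * (1 - 1))) :=
        tendsto_const_nhds.mul (tendsto_const_nhds.sub hrtend)
      simpa using this
  have hfinal := htend0.add hB
  have hfun : (fun N => AA N - BB N + BB N) = AA := by funext N; ring
  rw [hfun] at hfinal
  have hΦμ₀ : Φ μ₀ = ∏ i, ∫ x, f i x ∂(μ₀ : Measure F) := rfl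
  simpa [hΦμ₀] using hfinal
end

section
/- Properties of the Legendre transform of the log-generating function: Let μ be a Borel probability measure on ℝ^d such that Λ(p) := log ∫_{ℝ^d} exp(⟨p,x⟩) dμ(x) is finite for every p ∈ ℝ^d, and define Λ*(a) := sup_{p ∈ ℝ^d} ( ⟨p,a⟩ − Λ(p) ) for a ∈ ℝ^d (with values in [0,∞]). Let ā = ∫_{ℝ^d} x dμ(x) be the mean of μ (which exists since all exponential moments are finite). Then: (a) Λ* is a convex function on ℝ^d; (b) Λ*(a) ≥ 0 for every a ∈ ℝ^d; (c) Λ*(ā) = 0; and (d) conversely, if Λ*(a) = 0 for some a ∈ ℝ^d, then a = ā. -/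
open MeasureTheory

/-- The log-generating function `Λ(p) = log ∫ exp⟨p,x⟩ dμ(x)` of a measure on `ℝ^d`. -/
noncomputable def logGen (d : ℕ) (μ : Measure (Fin d → ℝ)) (p : Fin d → ℝ) : ℝ :=
  Real.log (∫ x, Real.exp (∑ i, p i * x i) ∂μ)

/-- The Legendre transform `Λ*(a) = sup_p (⟨p,a⟩ − Λ(p))`, with values in `(−∞, ∞]`
(realized in `EReal`). -/
noncomputable def legendreTransform (d : ℕ) (μ : Measure (Fin d → ℝ)) (a : Fin d → ℝ) :
    EReal :=
  ⨆ p : Fin d → ℝ, (((∑ i, p i * a i) - logGen d μ p : ℝ) : EReal)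

/-- **Properties of the Legendre transform of the log-generating function.** Let `μ` be a
Borel probability measure on `ℝ^d` with all exponential moments finite, let `Λ*` be the
Legendre transform of its log-generating function and `ā = ∫ x dμ` the mean of `μ`.  Then
(a) `Λ*` is convex; (b) `Λ* ≥ 0`; (c) `Λ*(ā) = 0`; and (d) if `Λ*(a) = 0` then `a = ā`. -/
theorem legendreTransform_properties (d : ℕ) (μ : Measure (Fin d → ℝ))
    [IsProbabilityMeasure μ]
    (hexp : ∀ p : Fin d → ℝ, Integrable (fun x => Real.exp (∑ i, p i * x i)) μ) :
    -- (a) convexity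
    (∀ a b : Fin d → ℝ, ∀ t₁ t₂ : ℝ, 0 ≤ t₁ → 0 ≤ t₂ → t₁ + t₂ = 1 →
      legendreTransform d μ (t₁ • a + t₂ • b) ≤
        (t₁ : EReal) * legendreTransform d μ a + (t₂ : EReal) * legendreTransform d μ b) ∧
    -- (b) nonnegativity
    (∀ a : Fin d → ℝ, 0 ≤ legendreTransform d μ a) ∧
    -- (c) the transform vanishes at the mean
    legendreTransform d μ (fun i => ∫ x, x i ∂μ) = 0 ∧
    -- (d) the mean is the only zero
    (∀ a : Fin d → ℝ, legendreTransform d μ a = 0 → a = fun i => ∫ x, x i ∂μ) := by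
  classical
  -- elementary inequality |u| ≤ e^u + e^{-u}
  have habs : ∀ u : ℝ, |u| ≤ Real.exp u + Real.exp (-u) := by
    intro u
    rcases le_total 0 u with h | h
    · rw [abs_of_nonneg h]
      nlinarith [Real.add_one_le_exp u, Real.exp_pos (-u)]
    · rw [abs_of_nonpos h]
      nlinarith [Real.add_one_le_exp (-u), Real.exp_pos u]
  have hsingle : ∀ (i : Fin d) (c : ℝ) (x : Fin d → ℝ),
      ∑ j, (Pi.single i c : Fin d → ℝ) j * x j = c * x i := by
    intro i c x
    rw [Finset.sum_eq_single i]
    · simp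
    · intro j _ hj; simp [Pi.single_eq_of_ne hj]
    · simp
  have hexp' : ∀ (i : Fin d) (c : ℝ), Integrable (fun x => Real.exp (c * x i)) μ := by
    intro i c
    have h := hexp (Pi.single i c)
    simpa only [hsingle] using h
  have hmeas : ∀ i : Fin d, AEStronglyMeasurable (fun x : Fin d → ℝ => x i) μ :=
    fun i => (measurable_pi_apply i).aestronglyMeasurable
  have hXi : ∀ i : Fin d, Integrable (fun x : Fin d → ℝ => x i) μ := by
    intro i
    refine ((hexp' i 1).add (hexp' i (-1))).mono' (hmeas i) ?_
    filter_upwards with x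
    simpa [Real.norm_eq_abs, one_mul, neg_one_mul] using habs (x i)
  have hlinI : ∀ p : Fin d → ℝ, Integrable (fun x => ∑ i, p i * x i) μ := by
    intro p
    exact integrable_finset_sum _ (fun i _ => (hXi i).const_mul (p i))
  have hlin_int : ∀ p : Fin d → ℝ,
      (∫ x, (∑ i, p i * x i) ∂μ) = ∑ i, p i * ∫ x, x i ∂μ := by
    intro p
    rw [integral_finset_sum _ (fun i _ => (hXi i).const_mul (p i))]
    simp [integral_const_mul]
  -- key inequality : exp⟨p,ā⟩ ≤ ∫ exp⟨p,x⟩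
  have hkey : ∀ p : Fin d → ℝ,
      Real.exp (∑ i, p i * ∫ x, x i ∂μ) ≤ ∫ x, Real.exp (∑ i, p i * x i) ∂μ := by
    intro p
    set m : ℝ := ∑ i, p i * ∫ x, x i ∂μ with hm
    have hle : ∀ x : Fin d → ℝ, Real.exp m * (1 + (∑ i, p i * x i) - m)
        ≤ Real.exp (∑ i, p i * x i) := by
      intro x
      have h1 := Real.add_one_le_exp ((∑ i, p i * x i) - m)
      have h2 : Real.exp m * Real.exp ((∑ i, p i * x i) - m)
          = Real.exp (∑ i, p i * x i) := by
        rw [← Real.exp_add]; ring_nf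
      nlinarith [Real.exp_pos m]
    have hint : Integrable (fun x => Real.exp m * (1 + (∑ i, p i * x i) - m)) μ := by
      refine Integrable.const_mul ?_ _
      exact (((integrable_const (1 : ℝ)).add (hlinI p)).sub (integrable_const m))
    have hmono := integral_mono hint (hexp p) hle
    have hcalc : (∫ x, Real.exp m * (1 + (∑ i, p i * x i) - m) ∂μ) = Real.exp m := by
      have hf1 : Integrable (fun x : Fin d → ℝ => (1:ℝ) + ∑ i, p i * x i) μ :=
        (integrable_const (1:ℝ)).add (hlinI p)
      rw [integral_const_mul, integral_sub hf1 (integrable_const m),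
        integral_add (integrable_const (1:ℝ)) (hlinI p),
        hlin_int p, integral_const, integral_const]
      simp [← hm]
    rw [hcalc] at hmono
    exact hmono
  have hpos : ∀ p : Fin d → ℝ, (0:ℝ) < ∫ x, Real.exp (∑ i, p i * x i) ∂μ := by
    intro p
    exact lt_of_lt_of_le (Real.exp_pos _) (hkey p)
  have hΛge : ∀ p : Fin d → ℝ, ∑ i, p i * ∫ x, x i ∂μ ≤ logGen d μ p := by
    intro p
    exact (Real.le_log_iff_exp_le (hpos p)).2 (hkey p)
  -- part (b)
  have hb : ∀ a : Fin d → ℝ, (0:EReal) ≤ legendreTransform d μ a := by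
    intro a
    have h0 : (((∑ i, (0:Fin d → ℝ) i * a i) - logGen d μ 0 : ℝ) : EReal)
        ≤ legendreTransform d μ a :=
      le_iSup (fun p => (((∑ i, p i * a i) - logGen d μ p : ℝ) : EReal)) 0
    have : ((∑ i, (0:Fin d → ℝ) i * a i) - logGen d μ 0 : ℝ) = 0 := by
      simp [logGen]
    rw [this] at h0
    simpa using h0
  -- part (c)
  have hc : legendreTransform d μ (fun i => ∫ x, x i ∂μ) = 0 := by
    refine le_antisymm ?_ (hb _)
    refine iSup_le fun p => ?_
    have h1 : ((∑ i, p i * ∫ x, x i ∂μ) - logGen d μ p : ℝ) ≤ 0 := by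
      have := hΛge p; linarith
    calc (((∑ i, p i * ∫ x, x i ∂μ) - logGen d μ p : ℝ) : EReal)
        ≤ ((0:ℝ) : EReal) := EReal.coe_le_coe_iff.2 h1
      _ = 0 := by simp
  -- part (a)
  have haa : ∀ a b : Fin d → ℝ, ∀ t₁ t₂ : ℝ, 0 ≤ t₁ → 0 ≤ t₂ → t₁ + t₂ = 1 →
      legendreTransform d μ (t₁ • a + t₂ • b) ≤
        (t₁ : EReal) * legendreTransform d μ a + (t₂ : EReal) * legendreTransform d μ b := by
    intro a b t₁ t₂ h1 h2 h12
    refine iSup_le fun p => ?_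
    have hsum : ∑ i, p i * (t₁ • a + t₂ • b) i
        = t₁ * (∑ i, p i * a i) + t₂ * (∑ i, p i * b i) := by
      rw [Finset.mul_sum, Finset.mul_sum, ← Finset.sum_add_distrib]
      refine Finset.sum_congr rfl fun i _ => ?_
      simp [Pi.add_apply, Pi.smul_apply, smul_eq_mul]
      ring
    have key : ((∑ i, p i * (t₁ • a + t₂ • b) i) - logGen d μ p : ℝ)
        = t₁ * ((∑ i, p i * a i) - logGen d μ p)
          + t₂ * ((∑ i, p i * b i) - logGen d μ p) := by
      rw [hsum]
      linear_combination (logGen d μ p) * h12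
    rw [key, EReal.coe_add, EReal.coe_mul, EReal.coe_mul]
    refine add_le_add ?_ ?_
    · exact mul_le_mul_of_nonneg_left
        (le_iSup (fun p => (((∑ i, p i * a i) - logGen d μ p : ℝ) : EReal)) p)
        (by exact_mod_cast h1)
    · exact mul_le_mul_of_nonneg_left
        (le_iSup (fun p => (((∑ i, p i * b i) - logGen d μ p : ℝ) : EReal)) p)
        (by exact_mod_cast h2)
  -- part (d)
  have hd : ∀ a : Fin d → ℝ, legendreTransform d μ a = 0 →
      a = fun i => ∫ x, x i ∂μ := by
    intro a ha0
    funext i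
    -- the one-dimensional condition along the i-th coordinate
    have hcond : ∀ t : ℝ, t * a i ≤ Real.log (∫ x, Real.exp (t * x i) ∂μ) := by
      intro t
      have h1 : (((∑ j, (Pi.single i t : Fin d → ℝ) j * a j) - logGen d μ (Pi.single i t) : ℝ) : EReal)
          ≤ 0 := by
        rw [← ha0]
        exact le_iSup (fun p => (((∑ j, p j * a j) - logGen d μ p : ℝ) : EReal)) _
      have h2 : ((∑ j, (Pi.single i t : Fin d → ℝ) j * a j) - logGen d μ (Pi.single i t) : ℝ) ≤ 0 := by
        exact_mod_cast h1
      have h3 : logGen d μ (Pi.single i t) = Real.log (∫ x, Real.exp (t * x i) ∂μ) := by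
        unfold logGen
        simp only [hsingle]
      rw [hsingle, h3] at h2
      linarith
    -- the mgf of the i-th coordinate and its derivative at 0
    set M : ℝ → ℝ := fun t => ∫ x, Real.exp (t * x i) ∂μ with hM
    have bound_int : Integrable
        (fun x : Fin d → ℝ => Real.exp (2 * x i) + 2 + Real.exp (-2 * x i)) μ :=
      ((hexp' i 2).add (integrable_const 2)).add (hexp' i (-2))
    have hder0 : Integrable (fun x : Fin d → ℝ => x i * Real.exp ((0:ℝ) * x i)) μ ∧
        HasDerivAt (fun t : ℝ => ∫ x, Real.exp (t * x i) ∂μ)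
          (∫ x, x i * Real.exp ((0:ℝ) * x i) ∂μ) 0 := by
      apply hasDerivAt_integral_of_dominated_loc_of_deriv_le
        (F := fun (t : ℝ) (x : Fin d → ℝ) => Real.exp (t * x i))
        (F' := fun (t : ℝ) (x : Fin d → ℝ) => x i * Real.exp (t * x i))
        (bound := fun x : Fin d → ℝ => Real.exp (2 * x i) + 2 + Real.exp (-2 * x i))
        (s := Metric.ball (0:ℝ) 1) (Metric.ball_mem_nhds _ one_pos)
      · exact Filter.Eventually.of_forall fun t => (hexp' i t).aestronglyMeasurable
      · exact hexp' i 0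
      · exact ((hmeas i).mul ((hexp' i 0).aestronglyMeasurable))
      · -- bound
        refine Filter.Eventually.of_forall fun x => fun t ht => ?_
        have htlt : |t| < 1 := by simpa [Real.dist_eq] using ht
        have hY : Real.exp (t * x i) ≤ Real.exp (x i) + Real.exp (-(x i)) := by
          have : t * x i ≤ |x i| := by
            calc t * x i ≤ |t * x i| := le_abs_self _
              _ = |t| * |x i| := abs_mul _ _
              _ ≤ 1 * |x i| := by
                exact mul_le_mul_of_nonneg_right htlt.le (abs_nonneg _)
              _ = |x i| := one_mul _
          calc Real.exp (t * x i) ≤ Real.exp |x i| := Real.exp_le_exp.2 this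
            _ ≤ Real.exp (x i) + Real.exp (-(x i)) := by
              rcases le_total 0 (x i) with h | h
              · rw [abs_of_nonneg h]; nlinarith [Real.exp_pos (-(x i))]
              · rw [abs_of_nonpos h]; nlinarith [Real.exp_pos (x i)]
        have hX : |x i| ≤ Real.exp (x i) + Real.exp (-(x i)) := habs (x i)
        have hAB : Real.exp (x i) * Real.exp (-(x i)) = 1 := by
          rw [← Real.exp_add]; simp
        have h2u : Real.exp (2 * x i) = Real.exp (x i) * Real.exp (x i) := by
          rw [← Real.exp_add]; ring_nf
        have h2u' : Real.exp (-2 * x i) = Real.exp (-(x i)) * Real.exp (-(x i)) := by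
          rw [← Real.exp_add]; ring_nf
        have hnorm : ‖x i * Real.exp (t * x i)‖ = |x i| * Real.exp (t * x i) := by
          rw [norm_mul, Real.norm_eq_abs, Real.norm_eq_abs,
            abs_of_pos (Real.exp_pos _)]
        rw [hnorm]
        nlinarith [mul_le_mul hX hY (Real.exp_pos (t * x i)).le
          (by positivity : (0:ℝ) ≤ Real.exp (x i) + Real.exp (-(x i)))]
      · exact bound_int
      · refine Filter.Eventually.of_forall fun x => fun t _ => ?_
        simpa [mul_comm] using (hasDerivAt_mul_const (x i)).exp
    have hM0 : M 0 = 1 := by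
      simp [hM]
    have hderM : HasDerivAt M (∫ x, x i ∂μ) 0 := by
      have h := hder0.2
      have : (∫ x, x i * Real.exp ((0:ℝ) * x i) ∂μ) = ∫ x, x i ∂μ := by
        refine integral_congr_ae (Filter.Eventually.of_forall fun x => ?_)
        simp
      rw [this] at h
      rw [hM]
      exact h
    have hderL : HasDerivAt (fun t => Real.log (M t)) ((∫ x, x i ∂μ) / M 0) 0 :=
      hderM.log (by rw [hM0]; norm_num)
    have hderf : HasDerivAt (fun t => Real.log (M t) - t * a i)
        ((∫ x, x i ∂μ) / M 0 - a i) 0 :=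
      hderL.sub (hasDerivAt_mul_const (a i))
    have hmin : IsLocalMin (fun t => Real.log (M t) - t * a i) 0 := by
      refine Filter.Eventually.of_forall fun t => ?_
      have h0 : Real.log (M 0) - (0:ℝ) * a i = 0 := by rw [hM0]; simp
      have ht := hcond t
      simp only [h0]
      have : t * a i ≤ Real.log (M t) := ht
      linarith
    have hzero := hmin.hasDerivAt_eq_zero hderf
    rw [hM0, div_one] at hzero
    linarith
  exact ⟨haa, hb, hc, hd⟩
end

section
/- Balanced-inhibition mean-field map: Let f(x) = exp(x)/(1 + exp(x)) be the logistic function, let γ = N(0,1) be the standard Gaussian measure on ℝ, and fix g > 0 and θ ∈ ℝ. Define h : [0,∞) → ℝ by h(q) = ∫_ℝ f( g·sqrt(q)·ξ − θ )² dγ(ξ). Then: (i) h is continuous on [0,∞); (ii) 0 < h(q) < 1 for every q ≥ 0; (iii) h(q) → 1/2 as q → ∞; and (iv) h has a fixed point in the open interval (0,1), i.e. there exists q* ∈ (0,1) with h(q*) = q*. -/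
open MeasureTheory ProbabilityTheory Filter

/-- The logistic (sigmoid) transfer function `f(x) = eˣ / (1 + eˣ)`. -/
noncomputable def logisticFn (x : ℝ) : ℝ := Real.exp x / (1 + Real.exp x)

/-- The balanced-inhibition mean-field map
`h(q) = ∫ f(g √q ξ − θ)² dγ(ξ)` where `γ = N(0,1)`. -/
noncomputable def balancedMFMap (g θ q : ℝ) : ℝ :=
  ∫ ξ, (logisticFn (g * Real.sqrt q * ξ - θ)) ^ 2 ∂(gaussianReal 0 1)

lemma logisticFn_pos (x : ℝ) : 0 < logisticFn x :=
  div_pos (Real.exp_pos x) (by positivity)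

lemma one_add_exp_pos (x : ℝ) : (0:ℝ) < 1 + Real.exp x := by positivity

lemma logisticFn_lt_one (x : ℝ) : logisticFn x < 1 := by
  rw [logisticFn, div_lt_one (one_add_exp_pos x)]
  linarith

lemma continuous_logisticFn : Continuous logisticFn :=
  Real.continuous_exp.div (continuous_const.add Real.continuous_exp)
    (fun x => (one_add_exp_pos x).ne')

lemma logisticFn_tendsto_atTop : Tendsto logisticFn atTop (nhds 1) := by
  have h : ∀ x : ℝ, logisticFn x = 1 - 1 / (1 + Real.exp x) := by
    intro x
    rw [logisticFn, eq_sub_iff_add_eq, ← add_div, div_eq_one_iff_eq (one_add_exp_pos x).ne']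
    ring
  simp only [funext h]
  have : Tendsto (fun x : ℝ => 1 / (1 + Real.exp x)) atTop (nhds 0) :=
    tendsto_const_nhds.div_atTop (tendsto_atTop_add_const_left _ 1 Real.tendsto_exp_atTop)
  simpa using tendsto_const_nhds.sub this

lemma logisticFn_tendsto_atBot : Tendsto logisticFn atBot (nhds 0) := by
  have : Tendsto logisticFn atBot (nhds (0 / (1 + 0))) :=
    Real.tendsto_exp_atBot.div (tendsto_const_nhds.add Real.tendsto_exp_atBot) (by norm_num)
  simpa using this

lemma sqrt_tendsto_atTop : Tendsto Real.sqrt atTop atTop := by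
  apply tendsto_atTop_atTop_of_monotone (fun a b h => Real.sqrt_le_sqrt h)
  intro b
  exact ⟨b ^ 2, by rw [Real.sqrt_sq_eq_abs]; exact le_abs_self b⟩

lemma mfIntegrand_aesm (g θ q : ℝ) :
    AEStronglyMeasurable (fun ξ => (logisticFn (g * Real.sqrt q * ξ - θ)) ^ 2)
      (gaussianReal 0 1) := by
  exact ((continuous_logisticFn.comp (by continuity)).pow 2).aestronglyMeasurable

lemma mfIntegrand_le_one (x : ℝ) : ‖(logisticFn x) ^ 2‖ ≤ 1 := by
  rw [Real.norm_eq_abs, abs_of_nonneg (by positivity)]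
  nlinarith [logisticFn_pos x, logisticFn_lt_one x]

lemma mfIntegrand_integrable (g θ q : ℝ) :
    Integrable (fun ξ => (logisticFn (g * Real.sqrt q * ξ - θ)) ^ 2) (gaussianReal 0 1) := by
  refine (integrable_const (1:ℝ)).mono' (mfIntegrand_aesm g θ q) ?_
  exact Eventually.of_forall fun ξ => mfIntegrand_le_one _

lemma balancedMFMap_continuous (g θ : ℝ) : Continuous (balancedMFMap g θ) := by
  rw [continuous_iff_continuousAt]
  intro q₀
  refine continuousAt_of_dominated (Eventually.of_forall fun q => mfIntegrand_aesm g θ q)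
    (Eventually.of_forall fun q => Eventually.of_forall fun ξ => mfIntegrand_le_one _)
    (integrable_const 1) ?_
  refine Eventually.of_forall fun ξ => ?_
  exact ((continuous_logisticFn.comp (by continuity)).pow 2).continuousAt

lemma gaussian_Ioi_toReal : ((gaussianReal 0 1) (Set.Ioi (0:ℝ))).toReal = 1 / 2 := by
  set μ := gaussianReal 0 1 with hμ
  have hzero : μ {(0:ℝ)} = 0 :=
    gaussianReal_absolutelyContinuous 0 (by norm_num) (measure_singleton 0)
  have hone : (⟨(-1:ℝ)^2, sq_nonneg _⟩ : NNReal) * 1 = 1 := by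
    refine NNReal.eq ?_
    norm_num
    rfl
  have hmap : Measure.map (fun x : ℝ => -1 * x) μ = μ := by
    rw [hμ, gaussianReal_map_const_mul (μ := 0) (v := 1) (-1 : ℝ), mul_zero]
    congr 1
  have hsym : μ (Set.Iio 0) = μ (Set.Ioi 0) := by
    conv_rhs => rw [← hmap]
    rw [Measure.map_apply (measurable_const_mul _) measurableSet_Ioi]
    congr 1
    ext x
    simp only [Set.mem_Iio, Set.mem_preimage, Set.mem_Ioi]
    constructor <;> intro h <;> linarith
  have hcompl : Set.Iio (0:ℝ) ∪ Set.Ioi 0 = ({0} : Set ℝ)ᶜ := by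
    ext x
    simp only [Set.mem_union, Set.mem_Iio, Set.mem_Ioi, Set.mem_compl_iff,
      Set.mem_singleton_iff]
    exact lt_or_lt_iff_ne
  have hdisj : Disjoint (Set.Iio (0:ℝ)) (Set.Ioi 0) :=
    Set.disjoint_left.mpr fun x hx hx' => (lt_asymm (Set.mem_Iio.mp hx)) (Set.mem_Ioi.mp hx')
  have hunion : μ (Set.Ioi 0) + μ (Set.Ioi 0) = 1 := by
    have h1 : μ (Set.Iio 0) + μ (Set.Ioi 0) = 1 := by
      rw [← measure_union hdisj measurableSet_Ioi, hcompl,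
        measure_compl (measurableSet_singleton 0) (measure_ne_top _ _), hzero, measure_univ,
        tsub_zero]
    rwa [hsym] at h1
  have hne : μ (Set.Ioi 0) ≠ ⊤ := measure_ne_top _ _
  have := congrArg ENNReal.toReal hunion
  rw [ENNReal.toReal_add hne hne, ENNReal.toReal_one] at this
  linarith

/-- **Balanced-inhibition mean-field map.** For `g > 0` and `θ ∈ ℝ`, the map
`h(q) = ∫ f(g √q ξ − θ)² dN(0,1)(ξ)` (with `f` the logistic function) is
(i) continuous on `[0,∞)`, (ii) takes values in `(0,1)` on `[0,∞)`,
(iii) tends to `1/2` as `q → ∞`, and (iv) has a fixed point `q* ∈ (0,1)`. -/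
theorem balancedMFMap_properties (g θ : ℝ) (hg : 0 < g) :
    ContinuousOn (balancedMFMap g θ) (Set.Ici 0) ∧
    (∀ q : ℝ, 0 ≤ q → 0 < balancedMFMap g θ q ∧ balancedMFMap g θ q < 1) ∧
    Tendsto (balancedMFMap g θ) atTop (nhds (1 / 2)) ∧
    ∃ qstar ∈ Set.Ioo (0 : ℝ) 1, balancedMFMap g θ qstar = qstar := by
  have hcont : Continuous (balancedMFMap g θ) := balancedMFMap_continuous g θ
  have hsqlt : ∀ x : ℝ, (logisticFn x) ^ 2 < 1 := fun x => by
    nlinarith [logisticFn_pos x, logisticFn_lt_one x]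
  have hbounds : ∀ q : ℝ, 0 < balancedMFMap g θ q ∧ balancedMFMap g θ q < 1 := by
    intro q
    constructor
    · refine (integral_pos_iff_support_of_nonneg (fun ξ => by positivity)
        (mfIntegrand_integrable g θ q)).mpr ?_
      have hsupp : Function.support
          (fun ξ => (logisticFn (g * Real.sqrt q * ξ - θ)) ^ 2) = Set.univ := by
        ext ξ
        simp only [Function.mem_support, Set.mem_univ, iff_true]
        exact (pow_pos (logisticFn_pos _) 2).ne'
      rw [hsupp, measure_univ]
      exact zero_lt_one
    · have hpos : 0 < ∫ ξ, ((1:ℝ) - (logisticFn (g * Real.sqrt q * ξ - θ)) ^ 2)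
          ∂(gaussianReal 0 1) := by
        refine (integral_pos_iff_support_of_nonneg
          (fun ξ => sub_nonneg.mpr (hsqlt _).le)
          ((integrable_const 1).sub (mfIntegrand_integrable g θ q))).mpr ?_
        have hsupp : Function.support
            (fun ξ => (1:ℝ) - (logisticFn (g * Real.sqrt q * ξ - θ)) ^ 2) = Set.univ := by
          ext ξ
          simp only [Function.mem_support, Set.mem_univ, iff_true]
          exact sub_ne_zero.mpr (hsqlt _).ne'
        rw [hsupp, measure_univ]
        exact zero_lt_one
      rw [integral_sub (integrable_const 1) (mfIntegrand_integrable g θ q),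
        integral_const, probReal_univ] at hpos
      simp only [ENNReal.toReal_one, one_smul] at hpos
      have : balancedMFMap g θ q
          = ∫ ξ, (logisticFn (g * Real.sqrt q * ξ - θ)) ^ 2 ∂(gaussianReal 0 1) := rfl
      linarith
  have hae : ∀ᵐ ξ ∂(gaussianReal 0 1), ξ ≠ 0 := by
    have h0 : (gaussianReal 0 1) {(0:ℝ)} = 0 :=
      gaussianReal_absolutelyContinuous 0 (by norm_num) (measure_singleton 0)
    rw [ae_iff]
    simpa using h0
  have hlim : Tendsto (balancedMFMap g θ) atTop (nhds (1 / 2)) := by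
    have key : Tendsto (balancedMFMap g θ) atTop
        (nhds (∫ ξ, Set.indicator (Set.Ioi 0) (fun _ => (1:ℝ)) ξ ∂(gaussianReal 0 1))) := by
      refine tendsto_integral_filter_of_dominated_convergence (fun _ => (1:ℝ))
        (Eventually.of_forall fun q => mfIntegrand_aesm g θ q)
        (Eventually.of_forall fun q => Eventually.of_forall fun ξ => mfIntegrand_le_one _)
        (integrable_const 1) ?_
      filter_upwards [hae] with ξ hξ
      rcases hξ.lt_or_gt with hneg | hpos
      · have harg : Tendsto (fun q => g * Real.sqrt q * ξ - θ) atTop atBot := by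
          have h1 : Tendsto (fun q => Real.sqrt q * (g * ξ) + -θ) atTop atBot :=
            tendsto_atBot_add_const_right _ _
              (sqrt_tendsto_atTop.atTop_mul_const_of_neg (by nlinarith))
          have heq : (fun q => g * Real.sqrt q * ξ - θ)
              = (fun q => Real.sqrt q * (g * ξ) + -θ) := by
            ext q; ring
          rw [heq]; exact h1
        have hsq := (logisticFn_tendsto_atBot.comp harg).pow 2
        have hind : Set.indicator (Set.Ioi 0) (fun _ => (1:ℝ)) ξ = 0 :=
          Set.indicator_of_notMem (by simpa using hneg.not_gt) _
        rw [hind]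
        simpa [Function.comp] using hsq
      · have harg : Tendsto (fun q => g * Real.sqrt q * ξ - θ) atTop atTop := by
          have h1 : Tendsto (fun q => Real.sqrt q * (g * ξ) + -θ) atTop atTop :=
            tendsto_atTop_add_const_right _ _
              (sqrt_tendsto_atTop.atTop_mul_const (by nlinarith))
          have heq : (fun q => g * Real.sqrt q * ξ - θ)
              = (fun q => Real.sqrt q * (g * ξ) + -θ) := by
            ext q; ring
          rw [heq]; exact h1
        have hsq := (logisticFn_tendsto_atTop.comp harg).pow 2
        have hind : Set.indicator (Set.Ioi 0) (fun _ => (1:ℝ)) ξ = 1 :=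
          Set.indicator_of_mem (by simpa using hpos) _
        rw [hind]
        simpa [Function.comp] using hsq
    rwa [integral_indicator_const _ measurableSet_Ioi, measureReal_def, gaussian_Ioi_toReal, smul_eq_mul,
      mul_one] at key
  refine ⟨hcont.continuousOn, fun q _ => hbounds q, hlim, ?_⟩
  have h0 : 0 < balancedMFMap g θ 0 := (hbounds 0).1
  have h1 : balancedMFMap g θ 1 < 1 := (hbounds 1).2
  have hφc : ContinuousOn (fun q => balancedMFMap g θ q - q) (Set.Icc 0 1) :=
    (hcont.sub continuous_id).continuousOn
  have hmem : (0:ℝ) ∈ Set.Ioo (balancedMFMap g θ 1 - 1) (balancedMFMap g θ 0 - 0) := by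
    constructor <;> simp <;> linarith
  obtain ⟨q, hq, hq0⟩ := intermediate_value_Ioo' (by norm_num : (0:ℝ) ≤ 1) hφc hmem
  have hq0' : balancedMFMap g θ q - q = 0 := hq0
  exact ⟨q, hq, by linarith⟩
end

section
/- Laplace asymptotics of the stationary firing-rate integral: Fix a ∈ ℝ. For b ∈ ℝ define F(b) = ∫_0^∞ e^{−y²}·( e^{2by} − e^{2ay} )/y dy; the integrand extends continuously to y = 0 (with value 2(b−a)) and the integral converges for every b. Then lim_{b → +∞} b·e^{−b²}·F(b) = sqrt(π); equivalently, F(b) is asymptotically equivalent to sqrt(π)·e^{b²}/b as b → +∞. -/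
open MeasureTheory Filter Topology

set_option maxHeartbeats 1000000

lemma lafr_bound (a b t : ℝ) (hb1 : 1 ≤ b) (hba : a ≤ b) (ht : -b < t) :
    ‖b / (t + b) * (Real.exp (-t ^ 2) * (1 - Real.exp (-(2 * (t + b) * (b - a)))))‖
      ≤ (16 * (1 + |a|) + 2) * Real.exp (-(1/2) * t ^ 2) := by
  have hs : 0 < t + b := by linarith
  have hx : 0 ≤ 2 * (t + b) * (b - a) := by nlinarith
  have hexp1 : Real.exp (-(2 * (t + b) * (b - a))) ≤ 1 :=
    Real.exp_le_one_iff.mpr (by linarith)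
  have hfacnn : 0 ≤ Real.exp (-t ^ 2) * (1 - Real.exp (-(2 * (t + b) * (b - a)))) := by
    have := Real.exp_nonneg (-t ^ 2); nlinarith
  have hHnn : 0 ≤ b / (t + b) *
      (Real.exp (-t ^ 2) * (1 - Real.exp (-(2 * (t + b) * (b - a))))) := by
    have : 0 ≤ b / (t + b) := by positivity
    nlinarith
  rw [Real.norm_eq_abs, abs_of_nonneg hHnn]
  have hE1 : (0:ℝ) < Real.exp (-(1/2) * t ^ 2) := Real.exp_pos _
  have hCge2 : (2:ℝ) ≤ 16 * (1 + |a|) + 2 := by have := abs_nonneg a; nlinarith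
  have hC2 : 2 * Real.exp (-(1/2) * t ^ 2) ≤ (16 * (1 + |a|) + 2) * Real.exp (-(1/2) * t ^ 2) :=
    mul_le_mul_of_nonneg_right hCge2 hE1.le
  by_cases hcase : -b/2 ≤ t
  · have hbs : b / (t + b) ≤ 2 := by
      rw [div_le_iff₀ hs]; linarith
    have hfac : Real.exp (-t ^ 2) * (1 - Real.exp (-(2 * (t + b) * (b - a))))
        ≤ Real.exp (-t ^ 2) := by
      nlinarith [Real.exp_nonneg (-t ^ 2), Real.exp_nonneg (-(2 * (t + b) * (b - a)))]
    have h1 : b / (t + b) * (Real.exp (-t ^ 2) * (1 - Real.exp (-(2 * (t + b) * (b - a)))))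
        ≤ 2 * Real.exp (-t ^ 2) := by
      have hnn : (0:ℝ) ≤ b / (t + b) := by positivity
      nlinarith [Real.exp_nonneg (-t ^ 2)]
    have h2 : Real.exp (-t ^ 2) ≤ Real.exp (-(1/2) * t ^ 2) :=
      Real.exp_le_exp.mpr (by nlinarith [sq_nonneg t])
    linarith
  · push_neg at hcase
    have ht2 : b ^ 2 / 4 ≤ t ^ 2 := by nlinarith
    have hx1 : 1 - Real.exp (-(2 * (t + b) * (b - a))) ≤ 2 * (t + b) * (b - a) := by
      nlinarith [Real.add_one_le_exp (-(2 * (t + b) * (b - a)))]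
    have step1 : b / (t + b) * (Real.exp (-t ^ 2) * (1 - Real.exp (-(2 * (t + b) * (b - a)))))
        ≤ 2 * b * (b - a) * Real.exp (-t ^ 2) := by
      have heq : b / (t + b) * (Real.exp (-t ^ 2) * (2 * (t + b) * (b - a)))
          = 2 * b * (b - a) * Real.exp (-t ^ 2) := by
        field_simp
      have h := mul_le_mul_of_nonneg_left
        (mul_le_mul_of_nonneg_left hx1 (Real.exp_nonneg (-t ^ 2)))
        (by positivity : (0:ℝ) ≤ b / (t + b))
      linarith [heq ▸ h]
    have step2 : Real.exp (-t ^ 2)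
        = Real.exp (-(1/2) * t ^ 2) * Real.exp (-(1/2) * t ^ 2) := by
      rw [← Real.exp_add]; congr 1; ring
    have step3 : Real.exp (-(1/2) * t ^ 2) ≤ Real.exp (-(b ^ 2 / 8)) :=
      Real.exp_le_exp.mpr (by linarith)
    have hbexp : b ^ 2 * Real.exp (-(b ^ 2 / 8)) ≤ 8 := by
      have h1 := Real.add_one_le_exp (b ^ 2 / 8)
      have h3 := Real.exp_pos (b ^ 2 / 8)
      rw [Real.exp_neg, mul_comm, inv_mul_le_iff₀ h3]
      nlinarith
    have k1 : b - a ≤ (1 + |a|) * b := by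
      have h := mul_le_mul_of_nonneg_left hb1 (abs_nonneg a)
      have h2 := neg_abs_le a
      nlinarith
    have hba2 : 2 * b * (b - a) ≤ 2 * (1 + |a|) * b ^ 2 := by
      have h := mul_le_mul_of_nonneg_left k1 (by linarith : (0:ℝ) ≤ 2 * b)
      nlinarith
    have step4 : 2 * b * (b - a) * Real.exp (-(b ^ 2 / 8)) ≤ 16 * (1 + |a|) := by
      calc 2 * b * (b - a) * Real.exp (-(b ^ 2 / 8))
          ≤ 2 * (1 + |a|) * b ^ 2 * Real.exp (-(b ^ 2 / 8)) :=
            mul_le_mul_of_nonneg_right hba2 (Real.exp_nonneg _)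
        _ = 2 * (1 + |a|) * (b ^ 2 * Real.exp (-(b ^ 2 / 8))) := by ring
        _ ≤ 2 * (1 + |a|) * 8 :=
            mul_le_mul_of_nonneg_left hbexp (by positivity)
        _ = 16 * (1 + |a|) := by ring
    have hbann : (0:ℝ) ≤ 2 * b * (b - a) := by nlinarith
    have final : 2 * b * (b - a) * Real.exp (-t ^ 2)
        ≤ 16 * (1 + |a|) * Real.exp (-(1/2) * t ^ 2) := by
      rw [step2, ← mul_assoc]
      have e1 : 2 * b * (b - a) * Real.exp (-(1/2) * t ^ 2)
          ≤ 2 * b * (b - a) * Real.exp (-(b ^ 2 / 8)) :=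
        mul_le_mul_of_nonneg_left step3 hbann
      exact mul_le_mul_of_nonneg_right (le_trans e1 step4) hE1.le
    have expand : (16 * (1 + |a|) + 2) * Real.exp (-(1/2) * t ^ 2)
        = 16 * (1 + |a|) * Real.exp (-(1/2) * t ^ 2)
          + 2 * Real.exp (-(1/2) * t ^ 2) := by ring
    linarith

/-- **Laplace asymptotics of the stationary firing-rate integral.** Fix `a : ℝ` and for
`b : ℝ` let `F b = ∫_0^∞ e^{−y²} (e^{2by} − e^{2ay}) / y dy`. Then
`b · e^{−b²} · F b → √π` as `b → +∞`, i.e. `F b ∼ √π e^{b²} / b`. -/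
theorem laplace_asymptotics_firing_rate (a : ℝ) :
    Tendsto
      (fun b : ℝ =>
        b * Real.exp (-b ^ 2) *
          ∫ y in Set.Ioi (0 : ℝ),
            Real.exp (-y ^ 2) * (Real.exp (2 * b * y) - Real.exp (2 * a * y)) / y)
      atTop (nhds (Real.sqrt Real.pi)) := by
  set H : ℝ → ℝ → ℝ := fun b t =>
    b / (t + b) * (Real.exp (-t ^ 2) * (1 - Real.exp (-(2 * (t + b) * (b - a))))) with hH
  -- Step 1: rewrite the target as a full-line integral of a translated indicator function
  have key : ∀ b : ℝ,
      b * Real.exp (-b ^ 2) *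
          ∫ y in Set.Ioi (0 : ℝ),
            Real.exp (-y ^ 2) * (Real.exp (2 * b * y) - Real.exp (2 * a * y)) / y
        = ∫ t, (Set.Ioi (-b)).indicator (H b) t := by
    intro b
    rw [← integral_const_mul]
    have hcongr : ∀ y : ℝ,
        b * Real.exp (-b ^ 2) *
          (Real.exp (-y ^ 2) * (Real.exp (2 * b * y) - Real.exp (2 * a * y)) / y)
        = b / y * (Real.exp (-(y - b) ^ 2) * (1 - Real.exp (-(2 * y * (b - a))))) := by
      intro y
      have e1 : Real.exp (-b ^ 2) * (Real.exp (-y ^ 2) * Real.exp (2 * b * y))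
          = Real.exp (-(y - b) ^ 2) := by
        rw [← Real.exp_add, ← Real.exp_add]; congr 1; ring
      have e2 : Real.exp (-b ^ 2) * (Real.exp (-y ^ 2) * Real.exp (2 * a * y))
          = Real.exp (-(y - b) ^ 2) * Real.exp (-(2 * y * (b - a))) := by
        rw [← Real.exp_add, ← Real.exp_add, ← Real.exp_add]; congr 1; ring
      simp only [div_eq_mul_inv]
      linear_combination (b * y⁻¹) * e1 - (b * y⁻¹) * e2
    calc ∫ y in Set.Ioi (0:ℝ), b * Real.exp (-b ^ 2) *
            (Real.exp (-y ^ 2) * (Real.exp (2 * b * y) - Real.exp (2 * a * y)) / y)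
        = ∫ y in Set.Ioi (0:ℝ),
            b / y * (Real.exp (-(y - b) ^ 2) * (1 - Real.exp (-(2 * y * (b - a))))) :=
          integral_congr_ae (ae_of_all _ fun y => hcongr y)
      _ = ∫ t, (Set.Ioi (-b)).indicator (H b) t := by
          rw [← integral_indicator measurableSet_Ioi,
            ← integral_add_right_eq_self (fun y => (Set.Ioi (0:ℝ)).indicator
              (fun y => b / y * (Real.exp (-(y - b) ^ 2) *
                (1 - Real.exp (-(2 * y * (b - a)))))) y) b]
          congr 1; funext t
          have h : (-b < t) ↔ (0 < t + b) := by constructor <;> intro <;> linarith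
          simp only [hH, Set.indicator_apply, Set.mem_Ioi, h, add_sub_cancel_right]
  simp only [key]
  -- Step 2: dominated convergence
  have hpi : (∫ t : ℝ, Real.exp (-t ^ 2)) = Real.sqrt Real.pi := by
    have := integral_gaussian 1
    simpa using this
  rw [← hpi]
  apply tendsto_integral_filter_of_dominated_convergence
    (fun t => (16 * (1 + |a|) + 2) * Real.exp (-(1/2) * t ^ 2))
  · filter_upwards with b
    apply Measurable.aestronglyMeasurable
    apply Measurable.indicator ?_ measurableSet_Ioi
    rw [hH]
    fun_prop
  · filter_upwards [eventually_ge_atTop (max a 1)] with b hb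
    have hb1 : (1:ℝ) ≤ b := le_trans (le_max_right a 1) hb
    have hba : a ≤ b := le_trans (le_max_left a 1) hb
    filter_upwards with t
    by_cases ht : t ∈ Set.Ioi (-b)
    · rw [Set.indicator_of_mem ht]
      exact lafr_bound a b t hb1 hba ht
    · rw [Set.indicator_of_notMem ht]
      simp only [norm_zero]
      positivity
  · exact (integrable_exp_neg_mul_sq (by norm_num : (0:ℝ) < 1/2)).const_mul _
  · filter_upwards with t
    have h1 : Tendsto (fun b : ℝ => b / (t + b)) atTop (𝓝 1) := by
      have htend : Tendsto (fun b : ℝ => t + b) atTop atTop :=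
        tendsto_atTop_add_const_left _ t tendsto_id
      have h0 : Tendsto (fun b : ℝ => t / (t + b)) atTop (𝓝 0) :=
        htend.const_div_atTop t
      have h2 : Tendsto (fun b : ℝ => 1 - t / (t + b)) atTop (𝓝 (1 - 0)) :=
        tendsto_const_nhds.sub h0
      rw [sub_zero] at h2
      apply h2.congr'
      filter_upwards [eventually_gt_atTop (|t|)] with b hb
      have hs : t + b ≠ 0 := by
        have h := abs_lt.mp hb
        intro hc; apply absurd hc; nlinarith [h.1, h.2]
      field_simp
      ring
    have h2 : Tendsto (fun b : ℝ => Real.exp (-(2 * (t + b) * (b - a)))) atTop (𝓝 0) := by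
      apply Real.tendsto_exp_atBot.comp
      apply Filter.tendsto_neg_atTop_atBot.comp
      have ht1 : Tendsto (fun b : ℝ => 2 * (t + b)) atTop atTop :=
        (tendsto_atTop_add_const_left _ t tendsto_id).const_mul_atTop (by norm_num)
      have ht2 : Tendsto (fun b : ℝ => b - a) atTop atTop :=
        tendsto_atTop_add_const_right _ (-a) tendsto_id
      exact ht1.atTop_mul_atTop₀ ht2
    have hlim : Tendsto (fun b => H b t) atTop
        (𝓝 (1 * (Real.exp (-t ^ 2) * (1 - 0)))) :=
      h1.mul (tendsto_const_nhds.mul (tendsto_const_nhds.sub h2))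
    rw [show (1 : ℝ) * (Real.exp (-t ^ 2) * (1 - 0)) = Real.exp (-t ^ 2) by ring] at hlim
    apply hlim.congr'
    filter_upwards [eventually_gt_atTop (-t)] with b hb
    rw [Set.indicator_of_mem (by simp only [Set.mem_Ioi]; linarith : t ∈ Set.Ioi (-b))]
end
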